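/- arXiv:1609.00973 — 3 statements merged into one kernel-verified Lean document; each statement's English description precedes it below -/
import Mathlib

section
/- If Λ is a Λ-sequence and f ∈ 𝔄, then f is of bounded Λ-variation if and only if sup_{n≥1} ‖B_nf‖_Λ < ∞. -/
open Filter Set MeasureTheory
open scoped ENNReal Topology

/-- `l` is a Λ-sequence (indexed from 0, so `l 0` plays the role of `λ₁`):
a nondecreasing sequence of positive reals whose reciprocals have divergent sum. -/
def IsLambdaSeq (l : ℕ → ℝ) : Prop :=
  Monotone l ∧ (∀ n, 0 < l n) ∧ ¬ Summable (fun n => 1 / l n)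

/-- A proper Λ-sequence: additionally `λₙ → ∞`. -/
def IsProperLambdaSeq (l : ℕ → ℝ) : Prop :=
  IsLambdaSeq l ∧ Tendsto l atTop atTop

/-- The Λ-variation of `f` computed over partition points taken from `K`:
the supremum of `∑ⱼ |f(x_{j+1}) - f(x_j)| / λ_{β(j)}` over all `m`, all nondecreasing
tuples `x₁ ≤ … ≤ x_{m+1}` of points of `K` and all permutations `β` of the gaps. -/
noncomputable def lamVarOn (l : ℕ → ℝ) (f : ℝ → ℝ) (K : Set ℝ) : ℝ≥0∞ :=
  ⨆ (m : ℕ) (x : Fin (m + 1) → ℝ) (_ : Monotone x) (_ : ∀ j, x j ∈ K)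
    (β : Equiv.Perm (Fin m)),
    ∑ j : Fin m, ENNReal.ofReal (|f (x j.succ) - f (x j.castSucc)| / l (β j))

/-- The Λ-variation of `f : [0,1] → ℝ`. -/
noncomputable def lamVar (l : ℕ → ℝ) (f : ℝ → ℝ) : ℝ≥0∞ :=
  lamVarOn l f (Set.Icc 0 1)

/-- The norm `‖f‖_Λ = V_Λ(f) + |f 0|` (valued in `[0,∞]`). -/
noncomputable def lamNorm (l : ℕ → ℝ) (f : ℝ → ℝ) : ℝ≥0∞ :=
  lamVar l f + ENNReal.ofReal |f 0|

/-- `f` is continuous in Λ-variation: `V_{Λ_(m)}(f) → 0` as `m → ∞`. -/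
def ContInLamVar (l : ℕ → ℝ) (f : ℝ → ℝ) : Prop :=
  Tendsto (fun m => lamVar (fun n => l (n + m)) f) atTop (𝓝 0)

/-- The restricted Λ-variation `V_{Λ,δ}(f)`: the supremum of `∑ⱼ |f(bⱼ) - f(aⱼ)| / λⱼ`
over all finite sequences of nonoverlapping closed subintervals `[aⱼ, bⱼ]` of `[0,1]`
of length at most `δ`, listed in any order. -/
noncomputable def lamVarDelta (l : ℕ → ℝ) (δ : ℝ) (f : ℝ → ℝ) : ℝ≥0∞ :=
  ⨆ (k : ℕ) (a : Fin k → ℝ) (b : Fin k → ℝ)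
    (_ : ∀ j, 0 ≤ a j ∧ a j ≤ b j ∧ b j ≤ 1 ∧ b j - a j ≤ δ)
    (_ : ∀ i j, i ≠ j → b i ≤ a j ∨ b j ≤ a i),
    ∑ j : Fin k, ENNReal.ofReal (|f (b j) - f (a j)| / l j)

/-- The `n`-th Bernstein polynomial of `f : [0,1] → ℝ`. -/
noncomputable def bern (n : ℕ) (f : ℝ → ℝ) (x : ℝ) : ℝ :=
  ∑ k ∈ Finset.range (n + 1),
    f ((k : ℝ) / n) * (n.choose k : ℝ) * x ^ k * (1 - x) ^ (n - k)

/-- The `n`-th Kantorovich polynomial of `f : [0,1] → ℝ`. -/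
noncomputable def kant (n : ℕ) (f : ℝ → ℝ) (x : ℝ) : ℝ :=
  ∑ k ∈ Finset.range (n + 1),
    (n.choose k : ℝ) * x ^ k * (1 - x) ^ (n - k) *
      ((n + 1) * ∫ t in ((k : ℝ) / (n + 1))..(((k : ℝ) + 1) / (n + 1)), f t)

/-- The class `𝔄`: bounded functions on `[0,1]` with one-sided limits at every interior
point, whose value there lies between the two one-sided limits. -/
def MemA (f : ℝ → ℝ) : Prop :=
  (∃ C : ℝ, ∀ x ∈ Set.Icc (0 : ℝ) 1, |f x| ≤ C) ∧
  ∀ x ∈ Set.Ioo (0 : ℝ) 1, ∃ L R : ℝ,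
    Tendsto f (𝓝[<] x) (𝓝 L) ∧ Tendsto f (𝓝[>] x) (𝓝 R) ∧
    min L R ≤ f x ∧ f x ≤ max L R

-- PART 1 : generic lemmas
section Part1

lemma strictMono_fin_nat_le {k : ℕ} {g : Fin k → ℕ} (hg : StrictMono g) :
    ∀ i : Fin k, (i : ℕ) ≤ g i := by
  have H : ∀ v (h : v < k), v ≤ g ⟨v, h⟩ := by
    intro v
    induction v with
    | zero => intro h; exact Nat.zero_le _
    | succ w ih =>
      intro h
      have h' : w < k := by omega
      have h1 := ih h'
      have h2 : g ⟨w, h'⟩ < g ⟨w + 1, h⟩ := hg (by simp [Fin.lt_def])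
      omega
  intro i; exact H i.val i.isLt

lemma exists_perm_le {k : ℕ} (γ : Fin k → ℕ) (hγ : Function.Injective γ) :
    ∃ σ : Equiv.Perm (Fin k), ∀ j, ((σ j : Fin k) : ℕ) ≤ γ j := by
  classical
  set s : Finset ℕ := Finset.univ.image γ with hs
  have hcard : s.card = k := by
    rw [hs, Finset.card_image_of_injective _ hγ, Finset.card_univ, Fintype.card_fin]
  set e := s.orderEmbOfFin hcard with he
  have hexists : ∀ j, ∃ i, e i = γ j := by
    intro j
    have hmem : γ j ∈ s := Finset.mem_image_of_mem _ (Finset.mem_univ j)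
    have : γ j ∈ Set.range e := by rw [Finset.range_orderEmbOfFin]; exact hmem
    exact this
  choose τ hτ using hexists
  have hinj : Function.Injective τ := by
    intro a c hac
    apply hγ; rw [← hτ a, ← hτ c, hac]
  have hbij := Finite.injective_iff_bijective.mp hinj
  refine ⟨Equiv.ofBijective τ hbij, fun j => ?_⟩
  have h1 : ((τ j : Fin k) : ℕ) ≤ e (τ j) := strictMono_fin_nat_le (e.strictMono) (τ j)
  have h2 : e (τ j) = γ j := hτ j
  simpa [Equiv.ofBijective, h2] using h1

variable {l : ℕ → ℝ}

lemma tuple_sum_le (hl : IsLambdaSeq l) (g : ℝ → ℝ) {k : ℕ} (q : Fin (k + 1) → ℝ)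
    (hq : Monotone q) (hmem : ∀ j, q j ∈ Set.Icc (0 : ℝ) 1) (γ : Fin k → ℕ)
    (hγ : Function.Injective γ) :
    ∑ j : Fin k, ENNReal.ofReal (|g (q j.succ) - g (q j.castSucc)| / l (γ j)) ≤ lamVar l g := by
  obtain ⟨σ, hσ⟩ := exists_perm_le γ hγ
  have step : ∀ j : Fin k, ENNReal.ofReal (|g (q j.succ) - g (q j.castSucc)| / l (γ j))
      ≤ ENNReal.ofReal (|g (q j.succ) - g (q j.castSucc)| / l (σ j)) := by
    intro j
    apply ENNReal.ofReal_le_ofReal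
    exact div_le_div_of_nonneg_left (abs_nonneg _) (hl.2.1 _) (hl.1 (hσ j))
  refine le_trans (Finset.sum_le_sum fun j _ => step j) ?_
  unfold lamVar lamVarOn
  refine le_iSup_of_le k ?_
  refine le_iSup_of_le q ?_
  refine le_iSup_of_le hq ?_
  refine le_iSup_of_le hmem ?_
  exact le_iSup_of_le σ le_rfl

lemma intervals_sum_le (hl : IsLambdaSeq l) (g : ℝ → ℝ) {k : ℕ} (a b : Fin k → ℝ)
    (hab : ∀ i, a i ≤ b i) (ha : ∀ i, a i ∈ Set.Icc (0 : ℝ) 1)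
    (hb : ∀ i, b i ∈ Set.Icc (0 : ℝ) 1)
    (hsort : ∀ i j : Fin k, i < j → b i ≤ a j)
    (γ : Fin k → ℕ) (hγ : Function.Injective γ) :
    ∑ i : Fin k, ENNReal.ofReal (|g (b i) - g (a i)| / l (γ i)) ≤ lamVar l g := by
  classical
  rcases Nat.eq_zero_or_pos k with hk | hk
  · subst hk; simp
  set N : ℕ := (Finset.univ.sup γ) + 1 with hN
  have hγlt : ∀ i, γ i < N := fun i =>
    Nat.lt_succ_of_le (Finset.le_sup (Finset.mem_univ i))
  -- the interleaved tuple
  set q : Fin (2 * k + 1) → ℝ := fun t =>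
    if h : t.val < 2 * k then
      (if t.val % 2 = 0 then a ⟨t.val / 2, by omega⟩ else b ⟨t.val / 2, by omega⟩)
    else b ⟨k - 1, by omega⟩ with hqdef
  set γ' : Fin (2 * k) → ℕ := fun t =>
    if h : t.val % 2 = 0 then γ ⟨t.val / 2, by omega⟩ else N + t.val with hγ'def
  have habk : ∀ (u v : ℕ) (hu : u < k) (hv : v < k), u ≤ v →
      b ⟨u, hu⟩ ≤ b ⟨v, hv⟩ := by
    intro u v hu hv huv
    rcases eq_or_lt_of_le huv with h | h
    · subst h; rfl
    · exact le_trans (hsort _ _ (by simpa [Fin.lt_def] using h)) (hab _)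
  have hqmono : Monotone q := by
    rw [Fin.monotone_iff_le_succ]
    intro i
    have hiv : i.val < 2 * k := i.isLt
    have hcs : (i.castSucc : Fin (2 * k + 1)).val = i.val := rfl
    have hss : (i.succ : Fin (2 * k + 1)).val = i.val + 1 := rfl
    by_cases hpar : i.val % 2 = 0
    · -- even
      have h2 : i.val + 1 < 2 * k + 1 := by omega
      have hlt : i.val + 1 < 2 * k ∨ i.val + 1 = 2 * k := by omega
      have hne : (i.val + 1) % 2 ≠ 0 := by omega
      rcases hlt with hlt | hlt
      · simp only [hqdef, hcs, hss, dif_pos hiv, dif_pos hlt, if_pos hpar, if_neg hne]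
        have : (i.val + 1) / 2 = i.val / 2 := by omega
        simp only [this]
        exact hab _
      · exfalso; omega
    · -- odd
      have hne2 : i.val + 1 ≠ 2 * k + 1 := by omega
      have heven : (i.val + 1) % 2 = 0 := by omega
      by_cases hlt : i.val + 1 < 2 * k
      · simp only [hqdef, hcs, hss, dif_pos hiv, dif_pos hlt, if_neg hpar, if_pos heven]
        apply hsort
        simp only [Fin.lt_def]
        omega
      · have hEq : i.val + 1 = 2 * k := by omega
        simp only [hqdef, hcs, hss, dif_pos hiv, if_neg hpar]
        rw [dif_neg (by omega)]
        exact habk _ _ _ _ (by omega)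
  have hqmem : ∀ t, q t ∈ Set.Icc (0 : ℝ) 1 := by
    intro t
    simp only [hqdef]
    split_ifs
    · exact ha _
    · exact hb _
    · exact hb _
  have hγ'inj : Function.Injective γ' := by
    intro s t hst
    simp only [hγ'def] at hst
    by_cases hs : s.val % 2 = 0 <;> by_cases ht : t.val % 2 = 0
    · rw [dif_pos hs, dif_pos ht] at hst
      have := hγ hst
      have : s.val / 2 = t.val / 2 := congrArg Fin.val this
      apply Fin.ext; omega
    · rw [dif_pos hs, dif_neg ht] at hst
      exact absurd hst (by have := hγlt ⟨s.val / 2, by omega⟩; omega)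
    · rw [dif_neg hs, dif_pos ht] at hst
      exact absurd hst.symm (by have := hγlt ⟨t.val / 2, by omega⟩; omega)
    · rw [dif_neg hs, dif_neg ht] at hst
      apply Fin.ext; omega
  have key := tuple_sum_le hl g q hqmono hqmem γ' hγ'inj
  refine le_trans ?_ key
  -- embed the k interval terms into the 2k gap terms
  set emb : Fin k → Fin (2 * k) := fun i => ⟨2 * i.val, by omega⟩ with hemb
  have hembinj : Function.Injective emb := by
    intro u v h
    have : 2 * u.val = 2 * v.val := congrArg Fin.val h
    apply Fin.ext; omega
  have hterm : ∀ i : Fin k,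
      ENNReal.ofReal (|g (b i) - g (a i)| / l (γ i)) =
      ENNReal.ofReal (|g (q (emb i).succ) - g (q (emb i).castSucc)| / l (γ' (emb i))) := by
    intro i
    have h1 : ((emb i).castSucc : Fin (2 * k + 1)).val = 2 * i.val := rfl
    have h2 : ((emb i).succ : Fin (2 * k + 1)).val = 2 * i.val + 1 := rfl
    have hlt1 : 2 * i.val < 2 * k := by have := i.isLt; omega
    have hlt2 : 2 * i.val + 1 < 2 * k := by have := i.isLt; omega
    have e1 : q (emb i).castSucc = a i := by
      simp only [hqdef, h1, dif_pos hlt1, if_pos (by omega : 2 * i.val % 2 = 0)]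
      congr 1; apply Fin.ext; simp only [Fin.val_mk]; omega
    have e2 : q (emb i).succ = b i := by
      simp only [hqdef, h2, dif_pos hlt2, if_neg (by omega : ¬(2 * i.val + 1) % 2 = 0)]
      congr 1; apply Fin.ext; simp only [Fin.val_mk]; omega
    have e3 : γ' (emb i) = γ i := by
      simp only [hγ'def, hemb, dif_pos (by omega : (2 * i.val) % 2 = 0)]
      congr 1; apply Fin.ext; simp only [Fin.val_mk]; omega
    rw [e1, e2, e3]
  calc ∑ i : Fin k, ENNReal.ofReal (|g (b i) - g (a i)| / l (γ i))
      = ∑ i : Fin k, ENNReal.ofReal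
          (|g (q (emb i).succ) - g (q (emb i).castSucc)| / l (γ' (emb i))) :=
        Finset.sum_congr rfl fun i _ => hterm i
    _ = ∑ t ∈ Finset.univ.image emb,
          ENNReal.ofReal (|g (q t.succ) - g (q t.castSucc)| / l (γ' t)) :=
        by rw [Finset.sum_image (fun u _ v _ h => hembinj h)]
    _ ≤ ∑ t : Fin (2 * k), ENNReal.ofReal (|g (q t.succ) - g (q t.castSucc)| / l (γ' t)) :=
        Finset.sum_le_sum_of_subset (Finset.subset_univ _)

lemma real_sum_le_toReal {ι : Type*} [Fintype ι] (t : ι → ℝ) (ht : ∀ i, 0 ≤ t i)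
    {A : ℝ≥0∞} (hA : A ≠ ⊤) (h : ∑ i : ι, ENNReal.ofReal (t i) ≤ A) :
    ∑ i : ι, t i ≤ A.toReal := by
  rw [← ENNReal.ofReal_le_iff_le_toReal hA]
  rw [ENNReal.ofReal_sum_of_nonneg (fun i _ => ht i)]
  exact h

end Part1
-- PART 2 : forward direction
section Part2

lemma binstep (q r : ℝ) (g : ℕ → ℝ) (n : ℕ) :
    ∑ k ∈ Finset.range (n + 1),
        (n.choose k : ℝ) * q ^ k * r ^ (n - k) * (q * g (k + 1) + r * g k) =
    ∑ k ∈ Finset.range (n + 2), ((n + 1).choose k : ℝ) * q ^ k * r ^ (n + 1 - k) * g k := by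
  have expand : ∀ k, (n.choose k : ℝ) * q ^ k * r ^ (n - k) * (q * g (k + 1) + r * g k)
      = (n.choose k : ℝ) * q ^ (k + 1) * r ^ (n - k) * g (k + 1)
        + (n.choose k : ℝ) * q ^ k * (r ^ (n - k) * r) * g k := by
    intro k; ring
  rw [Finset.sum_congr rfl fun k _ => expand k, Finset.sum_add_distrib]
  have h2 : ∀ k ∈ Finset.range (n + 1),
      (n.choose k : ℝ) * q ^ k * (r ^ (n - k) * r) * g k
      = (n.choose k : ℝ) * q ^ k * r ^ (n + 1 - k) * g k := by
    intro k hk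
    rw [Finset.mem_range] at hk
    have he : n - k + 1 = n + 1 - k := by omega
    rw [← pow_succ, he]
  rw [Finset.sum_congr rfl h2]
  -- RHS: peel first and use Pascal
  rw [Finset.sum_range_succ' (fun k => ((n + 1).choose k : ℝ) * q ^ k * r ^ (n + 1 - k) * g k)]
  have h3 : ∀ k ∈ Finset.range (n + 1),
      ((n + 1).choose (k + 1) : ℝ) * q ^ (k + 1) * r ^ (n + 1 - (k + 1)) * g (k + 1)
      = (n.choose k : ℝ) * q ^ (k + 1) * r ^ (n - k) * g (k + 1)
        + (n.choose (k + 1) : ℝ) * q ^ (k + 1) * r ^ (n - k) * g (k + 1) := by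
    intro k hk
    have hc : (n + 1).choose (k + 1) = n.choose k + n.choose (k + 1) := Nat.choose_succ_succ n k
    have he : n + 1 - (k + 1) = n - k := by omega
    rw [hc, he]
    push_cast
    ring
  rw [Finset.sum_congr rfl h3, Finset.sum_add_distrib]
  have h4 : ∑ k ∈ Finset.range (n + 1),
      (n.choose (k + 1) : ℝ) * q ^ (k + 1) * r ^ (n - k) * g (k + 1)
      + ((n + 1).choose 0 : ℝ) * q ^ 0 * r ^ (n + 1 - 0) * g 0
      = ∑ k ∈ Finset.range (n + 1), (n.choose k : ℝ) * q ^ k * r ^ (n + 1 - k) * g k := by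
    have := Finset.sum_range_succ' (fun k => (n.choose k : ℝ) * q ^ k * r ^ (n + 1 - k) * g k) (n + 1)
    -- this : ∑_{range (n+2)} = ∑_{range(n+1)} (shifted) + (k=0 term)
    have hlast : ∑ k ∈ Finset.range (n + 2), (n.choose k : ℝ) * q ^ k * r ^ (n + 1 - k) * g k
        = ∑ k ∈ Finset.range (n + 1), (n.choose k : ℝ) * q ^ k * r ^ (n + 1 - k) * g k := by
      rw [Finset.sum_range_succ]
      simp [Nat.choose_eq_zero_of_lt (by omega : n < n + 1)]
    have hshift : ∀ k ∈ Finset.range (n + 1),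
        (n.choose (k + 1) : ℝ) * q ^ (k + 1) * r ^ (n + 1 - (k + 1)) * g (k + 1)
        = (n.choose (k + 1) : ℝ) * q ^ (k + 1) * r ^ (n - k) * g (k + 1) := by
      intro k hk
      have he : n + 1 - (k + 1) = n - k := by omega
      rw [he]
    rw [hlast, Finset.sum_congr rfl hshift] at this
    simp only [Nat.choose_zero_right, Nat.cast_one] at this ⊢
    linarith [this]
  rw [← h4]
  ring

lemma marginal {M : Type} [Fintype M] (p : M → ℝ) (P : M → Prop) [DecidablePred P] :
    ∀ (n : ℕ) (g : ℕ → ℝ),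
      ∑ ω : Fin n → M, (∏ i, p (ω i)) * g (∑ i, if P (ω i) then 1 else 0) =
      ∑ k ∈ Finset.range (n + 1), (n.choose k : ℝ) *
        (∑ c ∈ Finset.univ.filter P, p c) ^ k *
        (∑ c ∈ Finset.univ.filter (fun c => ¬ P c), p c) ^ (n - k) * g k := by
  intro n
  induction n with
  | zero =>
    intro g
    simp
  | succ n ih =>
    intro g
    set q := ∑ c ∈ Finset.univ.filter P, p c with hq
    set r := ∑ c ∈ Finset.univ.filter (fun c => ¬ P c), p c with hr
    have hsplit : ∑ ω : Fin (n + 1) → M, (∏ i, p (ω i)) * g (∑ i, if P (ω i) then 1 else 0)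
        = ∑ c : M, ∑ ω : Fin n → M,
            (p c * ∏ i, p (ω i)) * g ((if P c then 1 else 0) + ∑ i, if P (ω i) then 1 else 0) := by
      rw [← Equiv.sum_comp (Fin.consEquiv (fun _ : Fin (n + 1) => M))
        (fun ω => (∏ i, p (ω i)) * g (∑ i, if P (ω i) then 1 else 0))]
      rw [Fintype.sum_prod_type]
      apply Finset.sum_congr rfl; intro c _
      apply Finset.sum_congr rfl; intro ω _
      have h1 : ∏ i, p ((Fin.consEquiv (fun _ : Fin (n + 1) => M)) (c, ω) i)
          = p c * ∏ i, p (ω i) := by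
        rw [Fin.prod_univ_succ]
        simp [Fin.consEquiv]
      have h2 : (∑ i, if P ((Fin.consEquiv (fun _ : Fin (n + 1) => M)) (c, ω) i) then 1 else 0)
          = (if P c then 1 else 0) + ∑ i, if P (ω i) then 1 else 0 := by
        rw [Fin.sum_univ_succ]
        simp [Fin.consEquiv]
      rw [h1, h2]
    rw [hsplit]
    have hinner : ∀ c : M, ∑ ω : Fin n → M,
        (p c * ∏ i, p (ω i)) * g ((if P c then 1 else 0) + ∑ i, if P (ω i) then 1 else 0)
        = p c * ∑ ω : Fin n → M,
            (∏ i, p (ω i)) * g ((if P c then 1 else 0) + ∑ i, if P (ω i) then 1 else 0) := by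
      intro c
      rw [Finset.mul_sum]
      apply Finset.sum_congr rfl; intro ω _; ring
    rw [Finset.sum_congr rfl fun c _ => hinner c]
    have hcases : ∀ c : M, p c * (∑ ω : Fin n → M,
        (∏ i, p (ω i)) * g ((if P c then 1 else 0) + ∑ i, if P (ω i) then 1 else 0))
        = p c * (if P c then ∑ ω : Fin n → M, (∏ i, p (ω i)) * g ((∑ i, if P (ω i) then 1 else 0) + 1)
            else ∑ ω : Fin n → M, (∏ i, p (ω i)) * g (∑ i, if P (ω i) then 1 else 0)) := by
      intro c
      by_cases hc : P c
      · simp only [if_pos hc]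
        congr 1
        apply Finset.sum_congr rfl; intro ω _
        rw [Nat.add_comm]
      · simp only [if_neg hc]
        congr 1
        apply Finset.sum_congr rfl; intro ω _
        rw [Nat.zero_add]
    rw [Finset.sum_congr rfl fun c _ => hcases c]
    set T1 := ∑ ω : Fin n → M, (∏ i, p (ω i)) * g ((∑ i, if P (ω i) then 1 else 0) + 1) with hT1
    set T0 := ∑ ω : Fin n → M, (∏ i, p (ω i)) * g (∑ i, if P (ω i) then 1 else 0) with hT0
    have hsum : ∑ c : M, p c * (if P c then T1 else T0) = q * T1 + r * T0 := by
      rw [← Finset.sum_filter_add_sum_filter_not Finset.univ P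
        (fun c => p c * (if P c then T1 else T0))]
      congr 1
      · rw [hq, Finset.sum_mul]
        apply Finset.sum_congr rfl
        intro c hc
        rw [Finset.mem_filter] at hc
        rw [if_pos hc.2]
      · rw [hr, Finset.sum_mul]
        apply Finset.sum_congr rfl
        intro c hc
        rw [Finset.mem_filter] at hc
        rw [if_neg hc.2]
    rw [hsum]
    have hih := ih (fun s => q * g (s + 1) + r * g s)
    have hlhs : ∑ ω : Fin n → M, (∏ i, p (ω i)) *
        (q * g ((∑ i, if P (ω i) then 1 else 0) + 1) + r * g (∑ i, if P (ω i) then 1 else 0))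
        = q * T1 + r * T0 := by
      rw [hT1, hT0, Finset.mul_sum, Finset.mul_sum, ← Finset.sum_add_distrib]
      apply Finset.sum_congr rfl; intro ω _; ring
    rw [← hlhs, hih]
    exact binstep q r g n

end Part2
-- PART 3 : bern as expectation, forward direction
section Part3

noncomputable def Xf (m : ℕ) (x : Fin (m + 1) → ℝ) : ℕ → ℝ := fun c =>
  if c = 0 then 0 else if h : c ≤ m + 1 then x ⟨c - 1, by omega⟩ else 1

noncomputable def pf (m : ℕ) (x : Fin (m + 1) → ℝ) : Fin (m + 2) → ℝ := fun c =>
  Xf m x (c.val + 1) - Xf m x c.val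

def cnt (n m : ℕ) (j : Fin (m + 1)) (ω : Fin n → Fin (m + 2)) : ℕ :=
  ∑ i, if ((ω i : ℕ) ≤ (j : ℕ)) then 1 else 0

variable {m : ℕ} {x : Fin (m + 1) → ℝ}

lemma Xf_step (hx : Monotone x) (hmem : ∀ j, x j ∈ Set.Icc (0 : ℝ) 1) :
    ∀ c ≤ m + 1, Xf m x c ≤ Xf m x (c + 1) := by
  intro c hc
  unfold Xf
  rcases Nat.eq_zero_or_pos c with h0 | h0
  · subst h0
    simp only [if_pos rfl, if_neg (Nat.one_ne_zero), dif_pos (by omega : 1 ≤ m + 1)]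
    exact (hmem _).1
  · rw [if_neg (by omega), if_neg (by omega)]
    rcases eq_or_lt_of_le hc with he | hlt
    · rw [dif_pos (by omega), dif_neg (by omega)]
      exact (hmem _).2
    · rw [dif_pos (by omega), dif_pos (by omega)]
      apply hx
      simp only [Fin.le_def]
      omega

lemma pf_nonneg (hx : Monotone x) (hmem : ∀ j, x j ∈ Set.Icc (0 : ℝ) 1)
    (c : Fin (m + 2)) : 0 ≤ pf m x c := by
  have := Xf_step hx hmem c.val (by omega)
  unfold pf; linarith

lemma Xf_zero : Xf m x 0 = 0 := by simp [Xf]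

lemma Xf_last : Xf m x (m + 2) = 1 := by
  unfold Xf; rw [if_neg (by omega), dif_neg (by omega)]

lemma Xf_at (j : Fin (m + 1)) : Xf m x ((j : ℕ) + 1) = x j := by
  unfold Xf
  rw [if_neg (by omega), dif_pos (by omega : (j : ℕ) + 1 ≤ m + 1)]
  congr 1

lemma sum_pf_all : ∑ c : Fin (m + 2), pf m x c = 1 := by
  simp only [pf]
  rw [Fin.sum_univ_eq_sum_range (fun v => Xf m x (v + 1) - Xf m x v)]
  rw [Finset.sum_range_sub (fun v => Xf m x v), Xf_zero, Xf_last, sub_zero]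

lemma sum_pf_le (j : Fin (m + 1)) :
    ∑ c ∈ Finset.univ.filter (fun c : Fin (m + 2) => (c : ℕ) ≤ (j : ℕ)), pf m x c = x j := by
  classical
  rw [Finset.sum_filter]
  simp only [pf]
  rw [Fin.sum_univ_eq_sum_range
    (fun v => if v ≤ (j : ℕ) then Xf m x (v + 1) - Xf m x v else 0)]
  rw [← Finset.sum_filter]
  have hf : (Finset.range (m + 2)).filter (fun v => v ≤ (j : ℕ)) = Finset.range ((j : ℕ) + 1) := by
    ext v
    simp only [Finset.mem_filter, Finset.mem_range]
    have := j.isLt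
    omega
  rw [hf, Finset.sum_range_sub (fun v => Xf m x v), Xf_zero, Xf_at, sub_zero]

lemma sum_pf_not (j : Fin (m + 1)) :
    ∑ c ∈ Finset.univ.filter (fun c : Fin (m + 2) => ¬((c : ℕ) ≤ (j : ℕ))), pf m x c
      = 1 - x j := by
  classical
  have h := Finset.sum_filter_add_sum_filter_not Finset.univ
    (fun c : Fin (m + 2) => (c : ℕ) ≤ (j : ℕ)) (pf m x)
  rw [sum_pf_le j, sum_pf_all] at h
  linarith

lemma bern_expect (hx : Monotone x) (hmem : ∀ j, x j ∈ Set.Icc (0 : ℝ) 1)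
    (f : ℝ → ℝ) (n : ℕ) (j : Fin (m + 1)) :
    bern n f (x j) = ∑ ω : Fin n → Fin (m + 2),
      (∏ i, pf m x (ω i)) * f ((cnt n m j ω : ℝ) / (n : ℝ)) := by
  classical
  have hm := marginal (pf m x) (fun c : Fin (m + 2) => (c : ℕ) ≤ (j : ℕ)) n
    (fun s : ℕ => f ((s : ℝ) / (n : ℝ)))
  rw [sum_pf_le j, sum_pf_not j] at hm
  simp only [cnt]
  rw [hm]
  unfold bern
  apply Finset.sum_congr rfl
  intro k _
  ring

lemma cnt_le (n : ℕ) (j : Fin (m + 1)) (ω : Fin n → Fin (m + 2)) : cnt n m j ω ≤ n := by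
  have : cnt n m j ω ≤ ∑ _i : Fin n, 1 :=
    Finset.sum_le_sum (fun i _ => by split_ifs <;> omega)
  simpa using this

lemma cnt_mono (n : ℕ) {j1 j2 : Fin (m + 1)} (h : j1 ≤ j2) (ω : Fin n → Fin (m + 2)) :
    cnt n m j1 ω ≤ cnt n m j2 ω := by
  apply Finset.sum_le_sum
  intro i _
  have hj : (j1 : ℕ) ≤ (j2 : ℕ) := h
  split_ifs <;> omega

lemma lamVar_bern_le {l : ℕ → ℝ} (hl : IsLambdaSeq l) (f : ℝ → ℝ) (n : ℕ) :
    lamVar l (bern n f) ≤ lamVar l f := by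
  classical
  by_cases hV : lamVar l f = ⊤
  · rw [hV]; exact le_top
  set A := lamVar l f with hA
  set V := A.toReal with hVdef
  have hAne : A ≠ ⊤ := hV
  show lamVarOn l (bern n f) (Set.Icc 0 1) ≤ A
  rw [lamVarOn]
  refine iSup_le fun m => iSup_le fun x => iSup_le fun hx => iSup_le fun hmem =>
    iSup_le fun β => ?_
  have hlpos : ∀ k, 0 < l k := hl.2.1
  have hwnn : ∀ ω : Fin n → Fin (m + 2), 0 ≤ ∏ i, pf m x (ω i) :=
    fun ω => Finset.prod_nonneg (fun i _ => pf_nonneg hx hmem _)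
  -- total mass one
  have hw1 : ∑ ω : Fin n → Fin (m + 2), ∏ i, pf m x (ω i) = 1 := by
    have hm := marginal (pf m x)
      (fun c : Fin (m + 2) => (c : ℕ) ≤ ((Fin.last m : Fin (m + 1)) : ℕ)) n
      (fun _ : ℕ => (1 : ℝ))
    rw [sum_pf_le, sum_pf_not] at hm
    have h2 : ∑ ω : Fin n → Fin (m + 2), ∏ i, pf m x (ω i)
        = ∑ ω : Fin n → Fin (m + 2), (∏ i, pf m x (ω i)) * 1 := by
      apply Finset.sum_congr rfl; intro ω _; ring
    rw [h2, hm]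
    have h3 : ∑ k ∈ Finset.range (n + 1),
        (n.choose k : ℝ) * x (Fin.last m) ^ k * (1 - x (Fin.last m)) ^ (n - k) * 1
        = (x (Fin.last m) + (1 - x (Fin.last m))) ^ n := by
      rw [add_pow]
      apply Finset.sum_congr rfl; intro k _; ring
    rw [h3]
    norm_num
  -- inner Λ-sum bound
  have key : ∀ ω : Fin n → Fin (m + 2),
      (∑ j : Fin m, |f ((cnt n m j.succ ω : ℝ) / (n : ℝ))
        - f ((cnt n m j.castSucc ω : ℝ) / (n : ℝ))| / l (β j)) ≤ V := by
    intro ω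
    set T : Fin (m + 1) → ℝ := fun j => (cnt n m j ω : ℝ) / (n : ℝ) with hT
    have hTmono : Monotone T := by
      intro j1 j2 hj
      rcases Nat.eq_zero_or_pos n with hn | hn
      · subst hn
        simp [hT, cnt]
      · have hpos : (0 : ℝ) < (n : ℝ) := by exact_mod_cast hn
        have hc : (cnt n m j1 ω : ℝ) ≤ (cnt n m j2 ω : ℝ) := by
          exact_mod_cast cnt_mono n hj ω
        exact div_le_div_of_nonneg_right hc hpos.le
    have hTmem : ∀ j, T j ∈ Set.Icc (0 : ℝ) 1 := by
      intro j
      rcases Nat.eq_zero_or_pos n with hn | hn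
      · subst hn
        simp [hT, cnt]
      · have hpos : (0 : ℝ) < (n : ℝ) := by exact_mod_cast hn
        constructor
        · exact div_nonneg (by positivity) hpos.le
        · rw [div_le_one hpos]
          exact_mod_cast cnt_le n j ω
    have hγinj : Function.Injective (fun j : Fin m => ((β j : Fin m) : ℕ)) := by
      intro a b h
      exact β.injective (Fin.ext h)
    have henn := tuple_sum_le hl f T hTmono hTmem _ hγinj
    have hnn : ∀ j : Fin m, 0 ≤ |f (T j.succ) - f (T j.castSucc)| / l (β j) :=
      fun j => div_nonneg (abs_nonneg _) (hlpos _).le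
    have := real_sum_le_toReal (fun j : Fin m => |f (T j.succ) - f (T j.castSucc)| / l (β j))
      hnn hAne (by exact henn)
    exact this
  -- per-j bound
  have hjbound : ∀ j : Fin m, |bern n f (x j.succ) - bern n f (x j.castSucc)|
      ≤ ∑ ω : Fin n → Fin (m + 2), (∏ i, pf m x (ω i)) *
          |f ((cnt n m j.succ ω : ℝ) / (n : ℝ)) - f ((cnt n m j.castSucc ω : ℝ) / (n : ℝ))| := by
    intro j
    rw [bern_expect hx hmem f n j.succ, bern_expect hx hmem f n j.castSucc,
      ← Finset.sum_sub_distrib]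
    refine le_trans (Finset.abs_sum_le_sum_abs _ _) ?_
    apply Finset.sum_le_sum; intro ω _
    rw [← mul_sub, abs_mul, abs_of_nonneg (hwnn ω)]
  -- assemble in ℝ
  have main : (∑ j : Fin m, |bern n f (x j.succ) - bern n f (x j.castSucc)| / l (β j)) ≤ V := by
    calc ∑ j : Fin m, |bern n f (x j.succ) - bern n f (x j.castSucc)| / l (β j)
        ≤ ∑ j : Fin m, (∑ ω : Fin n → Fin (m + 2), (∏ i, pf m x (ω i)) *
            |f ((cnt n m j.succ ω : ℝ) / (n : ℝ))
              - f ((cnt n m j.castSucc ω : ℝ) / (n : ℝ))|) / l (β j) := by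
          apply Finset.sum_le_sum; intro j _
          exact div_le_div_of_nonneg_right (hjbound j) (hlpos ((β j : Fin m) : ℕ)).le
      _ = ∑ j : Fin m, ∑ ω : Fin n → Fin (m + 2), (∏ i, pf m x (ω i)) *
            (|f ((cnt n m j.succ ω : ℝ) / (n : ℝ))
              - f ((cnt n m j.castSucc ω : ℝ) / (n : ℝ))| / l (β j)) := by
          apply Finset.sum_congr rfl; intro j _
          rw [Finset.sum_div]
          apply Finset.sum_congr rfl; intro ω _
          rw [mul_div_assoc]
      _ = ∑ ω : Fin n → Fin (m + 2), ∑ j : Fin m, (∏ i, pf m x (ω i)) *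
            (|f ((cnt n m j.succ ω : ℝ) / (n : ℝ))
              - f ((cnt n m j.castSucc ω : ℝ) / (n : ℝ))| / l (β j)) := Finset.sum_comm
      _ = ∑ ω : Fin n → Fin (m + 2), (∏ i, pf m x (ω i)) *
            (∑ j : Fin m, |f ((cnt n m j.succ ω : ℝ) / (n : ℝ))
              - f ((cnt n m j.castSucc ω : ℝ) / (n : ℝ))| / l (β j)) := by
          apply Finset.sum_congr rfl; intro ω _
          rw [Finset.mul_sum]
      _ ≤ ∑ ω : Fin n → Fin (m + 2), (∏ i, pf m x (ω i)) * V := by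
          apply Finset.sum_le_sum; intro ω _
          exact mul_le_mul_of_nonneg_left (key ω) (hwnn ω)
      _ = V := by rw [← Finset.sum_mul, hw1, one_mul]
  have hnn2 : ∀ j : Fin m, 0 ≤ |bern n f (x j.succ) - bern n f (x j.castSucc)| / l (β j) :=
    fun j => div_nonneg (abs_nonneg _) (hlpos _).le
  calc ∑ j : Fin m, ENNReal.ofReal (|bern n f (x j.succ) - bern n f (x j.castSucc)| / l (β j))
      = ENNReal.ofReal (∑ j : Fin m,
          |bern n f (x j.succ) - bern n f (x j.castSucc)| / l (β j)) :=
        (ENNReal.ofReal_sum_of_nonneg (fun j _ => hnn2 j)).symm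
    _ ≤ ENNReal.ofReal V := ENNReal.ofReal_le_ofReal main
    _ = A := ENNReal.ofReal_toReal hAne

lemma bern_at_zero (f : ℝ → ℝ) (n : ℕ) : bern n f 0 = f 0 := by
  unfold bern
  rw [Finset.sum_eq_single 0]
  · norm_num
  · intro k _ hk
    rcases Nat.exists_eq_succ_of_ne_zero hk with ⟨w, rfl⟩
    simp [pow_succ]
  · intro h
    exact absurd (Finset.mem_range.mpr (by omega)) h

lemma forward_dir {l : ℕ → ℝ} (hl : IsLambdaSeq l) (f : ℝ → ℝ)
    (h : lamVar l f < ⊤) :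
    (⨆ (n : ℕ) (_ : 1 ≤ n), lamNorm l (bern n f)) < ⊤ := by
  have hb : (⨆ (n : ℕ) (_ : 1 ≤ n), lamNorm l (bern n f))
      ≤ lamVar l f + ENNReal.ofReal |f 0| := by
    refine iSup_le fun n => iSup_le fun _ => ?_
    unfold lamNorm
    rw [bern_at_zero]
    exact add_le_add (lamVar_bern_le hl f n) le_rfl
  refine lt_of_le_of_lt hb ?_
  exact ENNReal.add_lt_top.mpr ⟨h, ENNReal.ofReal_lt_top⟩

end Part3
-- PART 4 : pointwise convergence of Bernstein polynomials
section Part4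

def GoodPt (f : ℝ → ℝ) (y : ℝ) : Prop :=
  Filter.Tendsto (fun n => bern n f y) Filter.atTop (𝓝 (f y))

lemma bern_weight_sum (x : ℝ) (n : ℕ) :
    ∑ k ∈ Finset.range (n + 1), (n.choose k : ℝ) * x ^ k * (1 - x) ^ (n - k) = 1 := by
  have h := add_pow x (1 - x) n
  rw [show x + (1 - x) = (1 : ℝ) by ring, one_pow] at h
  rw [show ∑ k ∈ Finset.range (n + 1), (n.choose k : ℝ) * x ^ k * (1 - x) ^ (n - k)
    = ∑ k ∈ Finset.range (n + 1), x ^ k * (1 - x) ^ (n - k) * (n.choose k : ℝ) from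
    Finset.sum_congr rfl fun k _ => by ring]
  exact h.symm

lemma bern_variance {x : ℝ} (hx : x ∈ Set.Icc (0 : ℝ) 1) {n : ℕ} (hn : 0 < n) :
    ∑ k ∈ Finset.range (n + 1),
        ((k : ℝ) / n - x) ^ 2 * ((n.choose k : ℝ) * x ^ k * (1 - x) ^ (n - k))
      = x * (1 - x) / n := by
  have hpos : (0 : ℝ) < n := by exact_mod_cast hn
  have h := bernstein.variance (n := n) hn.ne' (⟨x, hx⟩ : unitInterval)
  have key : ∀ k : Fin (n + 1),
      ((⟨x, hx⟩ : unitInterval) - (bernstein.z k : ℝ)) ^ 2 * bernstein n k ⟨x, hx⟩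
      = ((((k : ℕ) : ℝ)) / n - x) ^ 2 *
          ((n.choose (k : ℕ) : ℝ) * x ^ (k : ℕ) * (1 - x) ^ (n - (k : ℕ))) := by
    intro k
    rw [bernstein_apply]
    have hz : (bernstein.z k : ℝ) = ((k : ℕ) : ℝ) / n := rfl
    rw [hz]
    show (x - ((k : ℕ) : ℝ) / n) ^ 2 * _ = _
    ring
  rw [Finset.sum_congr rfl (fun k _ => key k)] at h
  rw [Fin.sum_univ_eq_sum_range (fun v =>
    (((v : ℝ)) / n - x) ^ 2 * ((n.choose v : ℝ) * x ^ v * (1 - x) ^ (n - v)))] at h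
  exact h

lemma bern_tendsto_of_modulus {f : ℝ → ℝ} {C : ℝ} (hC : ∀ t ∈ Set.Icc (0 : ℝ) 1, |f t| ≤ C)
    {y : ℝ} (hy : y ∈ Set.Icc (0 : ℝ) 1)
    (hmod : ∀ ε > (0 : ℝ), ∃ δ > (0 : ℝ), ∀ t ∈ Set.Icc (0 : ℝ) 1, |t - y| < δ → |f t - f y| ≤ ε) :
    GoodPt f y := by
  rw [GoodPt, Metric.tendsto_atTop]
  intro ε hε
  obtain ⟨δ, hδ, hδ'⟩ := hmod (ε / 2) (by linarith)
  have hC0 : 0 ≤ C := le_trans (abs_nonneg _) (hC 0 (by norm_num))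
  obtain ⟨N0, hN0⟩ := exists_nat_gt (4 * C / (δ ^ 2 * ε))
  refine ⟨max N0 1, fun n hn => ?_⟩
  have hn1 : 1 ≤ n := le_trans (le_max_right _ _) hn
  have hnN : (N0 : ℝ) ≤ n := by exact_mod_cast le_trans (le_max_left _ _) hn
  have hnpos : (0 : ℝ) < n := by exact_mod_cast hn1
  have hn' : 0 < n := hn1
  rw [Real.dist_eq]
  set w : ℕ → ℝ := fun k => (n.choose k : ℝ) * y ^ k * (1 - y) ^ (n - k) with hw
  have hy0 := hy.1
  have hy1 := hy.2
  have hwnn : ∀ k, 0 ≤ w k := by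
    intro k
    have h1y : (0 : ℝ) ≤ 1 - y := by linarith
    simp only [hw]
    positivity
  have hkmem : ∀ k ∈ Finset.range (n + 1), ((k : ℝ) / n) ∈ Set.Icc (0 : ℝ) 1 := by
    intro k hk
    rw [Finset.mem_range] at hk
    constructor
    · positivity
    · rw [div_le_one hnpos]
      exact_mod_cast by omega
  have hdec : bern n f y - f y = ∑ k ∈ Finset.range (n + 1), w k * (f ((k : ℝ) / n) - f y) := by
    have h2 : ∑ k ∈ Finset.range (n + 1), w k * (f ((k : ℝ) / n) - f y)
        = bern n f y - (∑ k ∈ Finset.range (n + 1), w k) * f y := by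
      unfold bern
      rw [Finset.sum_mul, ← Finset.sum_sub_distrib]
      apply Finset.sum_congr rfl; intro k _
      simp only [hw]; ring
    rw [h2]
    simp only [hw]
    rw [bern_weight_sum, one_mul]
  have hterm : ∀ k ∈ Finset.range (n + 1), |w k * (f ((k : ℝ) / n) - f y)|
      ≤ w k * (ε / 2 + (2 * C / δ ^ 2) * ((k : ℝ) / n - y) ^ 2) := by
    intro k hk
    rw [abs_mul, abs_of_nonneg (hwnn k)]
    apply mul_le_mul_of_nonneg_left ?_ (hwnn k)
    by_cases hnear : |(k : ℝ) / n - y| < δ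
    · have h1 := hδ' ((k : ℝ) / n) (hkmem k hk) hnear
      have h2 : 0 ≤ (2 * C / δ ^ 2) * ((k : ℝ) / n - y) ^ 2 := by positivity
      linarith
    · push_neg at hnear
      have hsq : δ ^ 2 ≤ ((k : ℝ) / n - y) ^ 2 := by
        have := pow_le_pow_left₀ hδ.le hnear 2
        rwa [sq_abs] at this
      have ha := hC ((k : ℝ) / n) (hkmem k hk)
      have hb := hC y hy
      have h1 : |f ((k : ℝ) / n) - f y| ≤ 2 * C := by
        calc |f ((k : ℝ) / n) - f y| ≤ |f ((k : ℝ) / n)| + |f y| := by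
              rw [sub_eq_add_neg]
              exact (abs_add_le _ _).trans (by rw [abs_neg])
          _ ≤ 2 * C := by linarith
      have h2 : 2 * C ≤ (2 * C / δ ^ 2) * ((k : ℝ) / n - y) ^ 2 := by
        have hd2 : (0 : ℝ) < δ ^ 2 := by positivity
        calc 2 * C = (2 * C / δ ^ 2) * δ ^ 2 := by field_simp
          _ ≤ (2 * C / δ ^ 2) * ((k : ℝ) / n - y) ^ 2 :=
            mul_le_mul_of_nonneg_left hsq (by positivity)
      have h3 : (0 : ℝ) ≤ ε / 2 := by linarith
      linarith
  have hsum : ∑ k ∈ Finset.range (n + 1), w k * (ε / 2 + (2 * C / δ ^ 2) * ((k : ℝ) / n - y) ^ 2)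
      = ε / 2 + (2 * C / δ ^ 2) * (y * (1 - y) / n) := by
    have hexp : ∀ k, w k * (ε / 2 + (2 * C / δ ^ 2) * ((k : ℝ) / n - y) ^ 2)
        = (ε / 2) * w k + (2 * C / δ ^ 2) * (((k : ℝ) / n - y) ^ 2 * w k) := fun k => by ring
    rw [Finset.sum_congr rfl fun k _ => hexp k, Finset.sum_add_distrib,
      ← Finset.mul_sum, ← Finset.mul_sum]
    simp only [hw]
    rw [bern_weight_sum y n, bern_variance hy hn']
    ring
  have hfinal : |bern n f y - f y| < ε := by
    have c1 : |bern n f y - f y|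
        ≤ ∑ k ∈ Finset.range (n + 1), |w k * (f ((k : ℝ) / n) - f y)| := by
      rw [hdec]
      exact Finset.abs_sum_le_sum_abs _ _
    have c2 := Finset.sum_le_sum hterm
    have hb1 : y * (1 - y) ≤ 1 := by nlinarith
    have hkey : 4 * C < δ ^ 2 * ε * n := by
      have h4 := (div_lt_iff₀ (by positivity : (0 : ℝ) < δ ^ 2 * ε)).mp
        (lt_of_lt_of_le hN0 hnN)
      linarith
    have e1 : (2 * C / δ ^ 2) * (y * (1 - y) / n) ≤ (2 * C / δ ^ 2) * (1 / n) := by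
      apply mul_le_mul_of_nonneg_left ?_ (by positivity)
      apply div_le_div_of_nonneg_right hb1 hnpos.le
    have e2 : (2 * C / δ ^ 2) * (1 / n) < ε / 2 := by
      have hdn : (0 : ℝ) < δ ^ 2 * n := by positivity
      rw [div_mul_div_comm, mul_one, div_lt_iff₀ hdn]
      nlinarith [hkey]
    calc |bern n f y - f y| ≤ _ := c1
      _ ≤ _ := c2
      _ = ε / 2 + (2 * C / δ ^ 2) * (y * (1 - y) / n) := hsum
      _ < ε := by linarith
  exact hfinal

lemma bern_at_one (f : ℝ → ℝ) {n : ℕ} (hn : 1 ≤ n) : bern n f 1 = f 1 := by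
  unfold bern
  rw [Finset.sum_eq_single n]
  · rw [Nat.choose_self, Nat.sub_self]
    have : (n : ℝ) / n = 1 := div_self (by positivity)
    simp [this]
  · intro k hk hkn
    rw [Finset.mem_range] at hk
    have : (1 : ℝ) - 1 = 0 := by ring
    rw [this, zero_pow (by omega : n - k ≠ 0)]
    ring
  · intro h
    exact absurd (Finset.mem_range.mpr (by omega)) h

lemma goodPt_zero (f : ℝ → ℝ) : GoodPt f 0 := by
  have : (fun n => bern n f 0) = fun _ => f 0 := funext fun n => bern_at_zero f n
  rw [GoodPt, this]
  exact tendsto_const_nhds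

lemma goodPt_one (f : ℝ → ℝ) : GoodPt f 1 := by
  rw [GoodPt]
  have h : (fun _ : ℕ => f 1) =ᶠ[Filter.atTop] (fun n => bern n f 1) := by
    filter_upwards [Filter.eventually_ge_atTop 1] with n hn
    exact (bern_at_one f hn).symm
  exact Filter.Tendsto.congr' h tendsto_const_nhds

end Part4
-- PART 5 : countability of discontinuities, good points are dense
section Part5

lemma countable_of_right_isolated {S : Set ℝ}
    (h : ∀ a ∈ S, ∃ δ > (0 : ℝ), ∀ y ∈ Set.Ioo a (a + δ), y ∉ S) : S.Countable := by
  classical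
  have h' : ∀ a : ℝ, ∃ δ : ℝ, 0 < δ ∧ (a ∈ S → ∀ y ∈ Set.Ioo a (a + δ), y ∉ S) := by
    intro a
    by_cases ha : a ∈ S
    · obtain ⟨δ, hδ, hy⟩ := h a ha
      exact ⟨δ, hδ, fun _ => hy⟩
    · exact ⟨1, one_pos, fun ha' => absurd ha' ha⟩
  choose δ hδ hiso using h'
  have hrat : ∀ a : ℝ, ∃ q : ℚ, a < (q : ℝ) ∧ (q : ℝ) < a + δ a := by
    intro a
    exact exists_rat_btwn (by linarith [hδ a])
  choose r hr1 hr2 using hrat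
  rw [← Set.countable_coe_iff]
  have hinj : Function.Injective (fun a : S => r a.val) := by
    rintro ⟨a, ha⟩ ⟨b, hb⟩ hab
    simp only at hab
    have habR : ((r a : ℚ) : ℝ) = ((r b : ℚ) : ℝ) := by exact_mod_cast hab
    apply Subtype.ext
    show a = b
    by_contra hne
    rcases lt_or_gt_of_ne hne with hlt | hlt
    · refine hiso a ha b ⟨hlt, ?_⟩ hb
      have h1 := hr1 b
      have h2 := hr2 a
      rw [← habR] at h1
      linarith
    · refine hiso b hb a ⟨hlt, ?_⟩ ha
      have h1 := hr1 a
      have h2 := hr2 b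
      rw [habR] at h1
      linarith
  exact hinj.countable

variable {f : ℝ → ℝ}

/-- interior points where `f` fails to be (two-sidedly) continuous with value `f a`. -/
def DSet (f : ℝ → ℝ) : Set ℝ :=
  {a | a ∈ Set.Ioo (0 : ℝ) 1 ∧
    ¬(Filter.Tendsto f (𝓝[<] a) (𝓝 (f a)) ∧ Filter.Tendsto f (𝓝[>] a) (𝓝 (f a)))}

lemma tendsto_abs_sub {L c : ℝ} {F : Filter ℝ} [F.NeBot] (hL : Filter.Tendsto f F (𝓝 L))
    (ε : ℝ) (h : ∀ᶠ t in F, |f t - c| ≤ ε) : |L - c| ≤ ε := by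
  have h1 : Filter.Tendsto (fun t => |f t - c|) F (𝓝 |L - c|) :=
    ((hL.sub_const c).abs)
  exact le_of_tendsto h1 h

lemma DSet_countable (hf : MemA f) : (DSet f).Countable := by
  classical
  have hch : ∀ a : ℝ, ∃ L R : ℝ, a ∈ Set.Ioo (0 : ℝ) 1 →
      (Filter.Tendsto f (𝓝[<] a) (𝓝 L) ∧ Filter.Tendsto f (𝓝[>] a) (𝓝 R) ∧
        min L R ≤ f a ∧ f a ≤ max L R) := by
    intro a
    by_cases ha : a ∈ Set.Ioo (0 : ℝ) 1
    · obtain ⟨L, R, h1, h2, h3, h4⟩ := hf.2 a ha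
      exact ⟨L, R, fun _ => ⟨h1, h2, h3, h4⟩⟩
    · exact ⟨0, 0, fun h => absurd h ha⟩
  choose L R hLR using hch
  set Dn : ℕ → Set ℝ := fun n =>
    {a | a ∈ Set.Ioo (0 : ℝ) 1 ∧
      1 / ((n : ℝ) + 1) ≤ max (max |f a - L a| |f a - R a|) |L a - R a|} with hDn
  have hsub : DSet f ⊆ ⋃ n, Dn n := by
    intro a ha
    obtain ⟨haI, hnc⟩ := ha
    have hq := hLR a haI
    have hM : 0 < max (max |f a - L a| |f a - R a|) |L a - R a| := by
      by_contra hM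
      push_neg at hM
      have e1 : |f a - L a| ≤ 0 := le_trans (le_trans (le_max_left _ _) (le_max_left _ _)) hM
      have e2 : |f a - R a| ≤ 0 := le_trans (le_trans (le_max_right _ _) (le_max_left _ _)) hM
      have hL' : L a = f a := by
        have := abs_nonneg (f a - L a); have : |f a - L a| = 0 := le_antisymm e1 (abs_nonneg _)
        have := abs_eq_zero.mp this; linarith
      have hR' : R a = f a := by
        have : |f a - R a| = 0 := le_antisymm e2 (abs_nonneg _)
        have := abs_eq_zero.mp this; linarith
      exact hnc ⟨hL' ▸ hq.1, hR' ▸ hq.2.1⟩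
    obtain ⟨n, hn⟩ := exists_nat_one_div_lt hM
    exact Set.mem_iUnion.mpr ⟨n, haI, hn.le⟩
  refine Set.Countable.mono hsub (Set.countable_iUnion fun n => ?_)
  apply countable_of_right_isolated
  intro a ha
  obtain ⟨haI, _⟩ := ha
  set ε : ℝ := 1 / ((n : ℝ) + 1) with hε
  have hεpos : 0 < ε := by positivity
  have hRt := (hLR a haI).2.1
  have hev : ∀ᶠ t in 𝓝[>] a, |f t - R a| ≤ ε / 6 := by
    have := Metric.tendsto_nhds.mp hRt (ε / 6) (by positivity)
    filter_upwards [this] with t ht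
    rw [Real.dist_eq] at ht
    exact ht.le
  obtain ⟨u, hu, hsub'⟩ := mem_nhdsGT_iff_exists_Ioo_subset.mp hev
  rw [Set.mem_Ioi] at hu
  refine ⟨u - a, by linarith, ?_⟩
  intro y hy hyD
  obtain ⟨hyI, hymax⟩ := hyD
  rw [← hε] at hymax
  have hy' : y ∈ Set.Ioo a u := by
    refine ⟨hy.1, ?_⟩
    have := hy.2
    linarith
  have h1 : |f y - R a| ≤ ε / 6 := hsub' hy'
  have hLy := (hLR y hyI).1
  have hRy := (hLR y hyI).2.1
  have h2 : |L y - R a| ≤ ε / 6 := by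
    apply tendsto_abs_sub hLy
    filter_upwards [Ioo_mem_nhdsLT_of_mem (⟨hy'.1, hy'.2.le⟩ : y ∈ Set.Ioc a u)] with t ht
    exact hsub' ht
  have h3 : |R y - R a| ≤ ε / 6 := by
    apply tendsto_abs_sub hRy
    filter_upwards [Ioo_mem_nhdsGT_of_mem (⟨le_refl y, hy'.2⟩ : y ∈ Set.Ico y u)] with t ht
    exact hsub' ⟨lt_trans hy'.1 ht.1, ht.2⟩
  have e1 : |f y - L y| ≤ ε / 3 := by
    have t1 := abs_sub_le (f y) (R a) (L y)
    have t2 : |R a - L y| = |L y - R a| := abs_sub_comm _ _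
    linarith
  have e2 : |f y - R y| ≤ ε / 3 := by
    have t1 := abs_sub_le (f y) (R a) (R y)
    have t2 : |R a - R y| = |R y - R a| := abs_sub_comm _ _
    linarith
  have e3 : |L y - R y| ≤ ε / 3 := by
    have t1 := abs_sub_le (L y) (R a) (R y)
    have t2 : |R a - R y| = |R y - R a| := abs_sub_comm _ _
    linarith
  have hcon : ε ≤ ε / 3 := le_trans hymax (max_le (max_le e1 e2) e3)
  linarith

lemma exists_Ioo_notmem {D : Set ℝ} (hD : D.Countable) {u v : ℝ} (h : u < v) :
    ∃ y ∈ Set.Ioo u v, y ∉ D := by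
  by_contra hcon
  push_neg at hcon
  have hsub : Set.Ioo u v ⊆ D := fun y hy => hcon y hy
  have hcnt : (Set.Ioo u v).Countable := hD.mono hsub
  have hle := Cardinal.le_aleph0_iff_set_countable.mpr hcnt
  rw [Cardinal.mk_Ioo_real h] at hle
  exact absurd hle (not_le.mpr Cardinal.aleph0_lt_continuum)

lemma goodPt_interior (hf : MemA f) {y : ℝ} (hy : y ∈ Set.Ioo (0 : ℝ) 1)
    (h1 : Filter.Tendsto f (𝓝[<] y) (𝓝 (f y)))
    (h2 : Filter.Tendsto f (𝓝[>] y) (𝓝 (f y))) :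
    GoodPt f y := by
  obtain ⟨C, hC⟩ := hf.1
  apply bern_tendsto_of_modulus hC (⟨hy.1.le, hy.2.le⟩ : y ∈ Set.Icc (0 : ℝ) 1)
  intro ε hε
  have hev1 : ∀ᶠ t in 𝓝[<] y, |f t - f y| ≤ ε := by
    have := Metric.tendsto_nhds.mp h1 ε hε
    filter_upwards [this] with t ht
    rw [Real.dist_eq] at ht
    exact ht.le
  have hev2 : ∀ᶠ t in 𝓝[>] y, |f t - f y| ≤ ε := by
    have := Metric.tendsto_nhds.mp h2 ε hε
    filter_upwards [this] with t ht
    rw [Real.dist_eq] at ht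
    exact ht.le
  obtain ⟨u1, hu1, hs1⟩ := mem_nhdsLT_iff_exists_Ioo_subset.mp hev1
  obtain ⟨u2, hu2, hs2⟩ := mem_nhdsGT_iff_exists_Ioo_subset.mp hev2
  rw [Set.mem_Iio] at hu1
  rw [Set.mem_Ioi] at hu2
  refine ⟨min (y - u1) (u2 - y), lt_min (by linarith) (by linarith), ?_⟩
  intro t _ htd
  have habs := abs_lt.mp htd
  rcases lt_trichotomy t y with h | h | h
  · apply hs1
    constructor
    · have : -(y - u1) ≤ -(min (y - u1) (u2 - y)) := by
        simp only [neg_le_neg_iff]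
        exact min_le_left _ _
      linarith [habs.1]
    · exact h
  · subst h; simp [hε.le]
  · apply hs2
    constructor
    · exact h
    · have : min (y - u1) (u2 - y) ≤ u2 - y := min_le_right _ _
      linarith [habs.2]

lemma hull_abs {u v w ε : ℝ} (h1 : min u v - ε ≤ w) (h2 : w ≤ max u v + ε) (c : ℝ) :
    |c - w| ≤ max |c - u| |c - v| + ε := by
  have k1 : c - u ≤ |c - u| := le_abs_self _
  have k2 : c - v ≤ |c - v| := le_abs_self _
  have k3 : u - c ≤ |c - u| := by rw [abs_sub_comm]; exact le_abs_self _
  have k4 : v - c ≤ |c - v| := by rw [abs_sub_comm]; exact le_abs_self _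
  have k5 : |c - u| ≤ max |c - u| |c - v| := le_max_left _ _
  have k6 : |c - v| ≤ max |c - u| |c - v| := le_max_right _ _
  rcases abs_cases (c - w) with ⟨he, _⟩ | ⟨he, _⟩ <;>
    rcases min_cases u v with ⟨hm, _⟩ | ⟨hm, _⟩ <;>
    rcases max_cases u v with ⟨hM, _⟩ | ⟨hM, _⟩ <;> linarith

lemma approx_pkg (hf : MemA f) {ε η : ℝ} (hε : 0 < ε) (hη : 0 < η) :
    ∀ a : ℝ, ∃ u v : ℝ, a ∈ Set.Icc (0 : ℝ) 1 →
      (GoodPt f u ∧ GoodPt f v ∧ u ∈ Set.Icc (0 : ℝ) 1 ∧ v ∈ Set.Icc (0 : ℝ) 1 ∧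
        a - η < u ∧ u ≤ a ∧ a ≤ v ∧ v < a + η ∧
        ∀ c : ℝ, |c - f a| ≤ max |c - f u| |c - f v| + ε) := by
  intro a
  by_cases haI : a ∈ Set.Icc (0 : ℝ) 1
  swap
  · exact ⟨0, 0, fun h => absurd h haI⟩
  have hself : ∀ c : ℝ, |c - f a| ≤ max |c - f a| |c - f a| + ε := by
    intro c
    simp only [max_self]
    linarith [abs_nonneg (c - f a)]
  by_cases h0 : a = 0
  · subst h0
    exact ⟨0, 0, fun _ => ⟨goodPt_zero f, goodPt_zero f, by norm_num, by norm_num,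
      by linarith, le_refl _, le_refl _, by linarith, hself⟩⟩
  by_cases h1 : a = 1
  · subst h1
    exact ⟨1, 1, fun _ => ⟨goodPt_one f, goodPt_one f, by norm_num, by norm_num,
      by linarith, le_refl _, le_refl _, by linarith, hself⟩⟩
  have haO : a ∈ Set.Ioo (0 : ℝ) 1 :=
    ⟨lt_of_le_of_ne haI.1 (Ne.symm h0), lt_of_le_of_ne haI.2 h1⟩
  obtain ⟨L, R, hLt, hRt, hmin, hmax⟩ := hf.2 a haO
  have hcnt := DSet_countable hf
  -- left approximant
  have hevL : ∀ᶠ t in 𝓝[<] a, |f t - L| < ε := by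
    have := Metric.tendsto_nhds.mp hLt ε hε
    filter_upwards [this] with t ht
    rwa [Real.dist_eq] at ht
  obtain ⟨u1, hu1, hs1⟩ := mem_nhdsLT_iff_exists_Ioo_subset.mp hevL
  rw [Set.mem_Iio] at hu1
  set lo := max u1 (max (a - η) (a / 2)) with hlo
  have hloa : lo < a := by
    apply max_lt hu1
    apply max_lt (by linarith) (by linarith [haO.1])
  obtain ⟨yu, hyu, hyuD⟩ := exists_Ioo_notmem hcnt hloa
  have hyuI : yu ∈ Set.Ioo (0 : ℝ) 1 := by
    constructor
    · have : a / 2 ≤ lo := le_trans (le_max_right _ _) (le_max_right _ _)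
      have := hyu.1
      have := haO.1
      linarith
    · exact lt_trans hyu.2 haO.2
  have hyuGood : GoodPt f yu := by
    have hcontu : Filter.Tendsto f (𝓝[<] yu) (𝓝 (f yu)) ∧
        Filter.Tendsto f (𝓝[>] yu) (𝓝 (f yu)) := by
      by_contra hq
      exact hyuD ⟨hyuI, hq⟩
    exact goodPt_interior hf hyuI hcontu.1 hcontu.2
  have hfyu : |f yu - L| < ε := by
    apply hs1
    constructor
    · exact lt_of_le_of_lt (le_max_left _ _) hyu.1
    · exact hyu.2
  -- right approximant
  have hevR : ∀ᶠ t in 𝓝[>] a, |f t - R| < ε := by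
    have := Metric.tendsto_nhds.mp hRt ε hε
    filter_upwards [this] with t ht
    rwa [Real.dist_eq] at ht
  obtain ⟨u2, hu2, hs2⟩ := mem_nhdsGT_iff_exists_Ioo_subset.mp hevR
  rw [Set.mem_Ioi] at hu2
  set hi := min u2 (min (a + η) ((a + 1) / 2)) with hhi
  have hhia : a < hi := by
    apply lt_min hu2
    apply lt_min (by linarith) (by linarith [haO.2])
  obtain ⟨yv, hyv, hyvD⟩ := exists_Ioo_notmem hcnt hhia
  have hyvI : yv ∈ Set.Ioo (0 : ℝ) 1 := by
    constructor
    · exact lt_trans haO.1 hyv.1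
    · have : hi ≤ (a + 1) / 2 := le_trans (min_le_right _ _) (min_le_right _ _)
      have := hyv.2
      have := haO.2
      linarith
  have hyvGood : GoodPt f yv := by
    have hcontv : Filter.Tendsto f (𝓝[<] yv) (𝓝 (f yv)) ∧
        Filter.Tendsto f (𝓝[>] yv) (𝓝 (f yv)) := by
      by_contra hq
      exact hyvD ⟨hyvI, hq⟩
    exact goodPt_interior hf hyvI hcontv.1 hcontv.2
  have hfyv : |f yv - R| < ε := by
    apply hs2
    constructor
    · exact hyv.1
    · exact lt_of_lt_of_le hyv.2 (min_le_left _ _)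
  refine ⟨yu, yv, fun _ => ⟨hyuGood, hyvGood, ⟨hyuI.1.le, hyuI.2.le⟩, ⟨hyvI.1.le, hyvI.2.le⟩,
    ?_, hyu.2.le, hyv.1.le, ?_, ?_⟩⟩
  · have : a - η ≤ lo := le_trans (le_max_left _ _) (le_max_right _ _)
    linarith [hyu.1]
  · have : hi ≤ a + η := le_trans (min_le_right _ _) (min_le_left _ _)
    linarith [hyv.2]
  · intro c
    have d1 : f yu - L ≤ |f yu - L| := le_abs_self _
    have d1' : L - f yu ≤ |f yu - L| := by rw [abs_sub_comm]; exact le_abs_self _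
    have d2 : f yv - R ≤ |f yv - R| := le_abs_self _
    have d2' : R - f yv ≤ |f yv - R| := by rw [abs_sub_comm]; exact le_abs_self _
    have b1 : min (f yu) (f yv) - ε ≤ f a := by
      have c1 : min (f yu) (f yv) ≤ f yu := min_le_left _ _
      have c2 : min (f yu) (f yv) ≤ f yv := min_le_right _ _
      rcases min_cases L R with ⟨hm, _⟩ | ⟨hm, _⟩ <;> linarith [hmin]
    have b2 : f a ≤ max (f yu) (f yv) + ε := by
      have c1 : f yu ≤ max (f yu) (f yv) := le_max_left _ _
      have c2 : f yv ≤ max (f yu) (f yv) := le_max_right _ _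
      rcases max_cases L R with ⟨hm, _⟩ | ⟨hm, _⟩ <;> linarith [hmax]
    exact hull_abs b1 b2 c

end Part5
-- PART 6 : backward direction
section Part6

lemma good_intervals_le {l : ℕ → ℝ} (hl : IsLambdaSeq l) {f : ℝ → ℝ}
    {S : ℝ≥0∞} (hS : ∀ n : ℕ, 1 ≤ n → lamVar l (bern n f) ≤ S) (hSne : S ≠ ⊤)
    {k : ℕ} (a b : Fin k → ℝ)
    (hab : ∀ i, a i ≤ b i) (ha : ∀ i, a i ∈ Set.Icc (0 : ℝ) 1)
    (hb : ∀ i, b i ∈ Set.Icc (0 : ℝ) 1)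
    (hsort : ∀ i j : Fin k, i < j → b i ≤ a j)
    (hga : ∀ i, GoodPt f (a i)) (hgb : ∀ i, GoodPt f (b i))
    (γ : Fin k → ℕ) (hγ : Function.Injective γ) :
    ∑ i : Fin k, |f (b i) - f (a i)| / l (γ i) ≤ S.toReal := by
  have hn : ∀ n : ℕ, 1 ≤ n →
      ∑ i : Fin k, |bern n f (b i) - bern n f (a i)| / l (γ i) ≤ S.toReal := by
    intro n hn1
    apply real_sum_le_toReal _ (fun i => div_nonneg (abs_nonneg _) (hl.2.1 _).le) hSne
    exact le_trans (intervals_sum_le hl (bern n f) a b hab ha hb hsort γ hγ) (hS n hn1)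
  have htend : Filter.Tendsto
      (fun n => ∑ i : Fin k, |bern n f (b i) - bern n f (a i)| / l (γ i))
      Filter.atTop (𝓝 (∑ i : Fin k, |f (b i) - f (a i)| / l (γ i))) := by
    apply tendsto_finset_sum
    intro i _
    exact (((hgb i).sub (hga i)).abs).div_const _
  apply le_of_tendsto htend
  filter_upwards [Filter.eventually_ge_atTop 1] with n hn1
  exact hn n hn1

lemma two_hull {A B A' B' w w' ε : ℝ}
    (h1 : ∀ c, |c - w| ≤ max |c - A| |c - B| + ε)
    (h2 : ∀ c, |c - w'| ≤ max |c - A'| |c - B'| + ε) :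
    |w' - w| ≤ |A' - A| + |B' - B| + |B - A| + |B' - A'| + 2 * ε := by
  have g1 := h1 w'
  have g2 := h2 A
  have g3 := h2 B
  have c1 : |w' - A| = |A - w'| := abs_sub_comm _ _
  have c2 : |w' - B| = |B - w'| := abs_sub_comm _ _
  have t1 : |A - A'| = |A' - A| := abs_sub_comm _ _
  have t2 : |B - B'| = |B' - B| := abs_sub_comm _ _
  have q1 : |A - B'| ≤ |A - A'| + |A' - B'| := abs_sub_le _ _ _
  have q1' : |A' - B'| = |B' - A'| := abs_sub_comm _ _
  have q2 : |B - A'| ≤ |B - A| + |A - A'| := abs_sub_le _ _ _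
  rcases max_cases |w' - A| |w' - B| with ⟨hm1, _⟩ | ⟨hm1, _⟩ <;>
    rcases max_cases |A - A'| |A - B'| with ⟨hm2, _⟩ | ⟨hm2, _⟩ <;>
    rcases max_cases |B - A'| |B - B'| with ⟨hm3, _⟩ | ⟨hm3, _⟩ <;>
    linarith [abs_nonneg (A' - A), abs_nonneg (B' - B), abs_nonneg (B - A),
      abs_nonneg (B' - A')]

lemma backward_dir {l : ℕ → ℝ} (hl : IsLambdaSeq l) (f : ℝ → ℝ) (hf : MemA f)
    (h : (⨆ (n : ℕ) (_ : 1 ≤ n), lamNorm l (bern n f)) < ⊤) : lamVar l f < ⊤ := by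
  classical
  set S := ⨆ (n : ℕ) (_ : 1 ≤ n), lamNorm l (bern n f) with hSdef
  have hSne : S ≠ ⊤ := h.ne
  have hS : ∀ n : ℕ, 1 ≤ n → lamVar l (bern n f) ≤ S := by
    intro n hn1
    have e1 : lamVar l (bern n f) ≤ lamNorm l (bern n f) := by
      rw [lamNorm]; exact self_le_add_right _ _
    refine le_trans e1 ?_
    exact le_iSup₂ (f := fun (n : ℕ) (_ : 1 ≤ n) => lamNorm l (bern n f)) n hn1
  have hl0 : 0 < l 0 := hl.2.1 0
  have hStR : 0 ≤ S.toReal := ENNReal.toReal_nonneg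
  suffices hb : lamVar l f ≤ ENNReal.ofReal (4 * S.toReal) from
    lt_of_le_of_lt hb ENNReal.ofReal_lt_top
  show lamVarOn l f (Set.Icc 0 1) ≤ _
  rw [lamVarOn]
  refine iSup_le fun m => iSup_le fun x => iSup_le fun hx => iSup_le fun hmem =>
    iSup_le fun β => ?_
  have hnn : ∀ j : Fin m, 0 ≤ |f (x j.succ) - f (x j.castSucc)| / l (β j) :=
    fun j => div_nonneg (abs_nonneg _) (hl.2.1 _).le
  rw [← ENNReal.ofReal_sum_of_nonneg (fun j _ => hnn j)]
  apply ENNReal.ofReal_le_ofReal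
  set J : Finset (Fin m) := Finset.univ.filter (fun j => x j.castSucc < x j.succ) with hJdef
  have hgapeq : ∀ j : Fin m, j ∉ J → x j.succ = x j.castSucc := by
    intro j hj
    have h1 : ¬ x j.castSucc < x j.succ := by
      intro hlt
      exact hj (by rw [hJdef]; exact Finset.mem_filter.mpr ⟨Finset.mem_univ _, hlt⟩)
    exact le_antisymm (not_lt.mp h1) (hx (Fin.castSucc_le_succ j))
  by_cases hJe : J = ∅
  · have hz : ∀ j : Fin m, |f (x j.succ) - f (x j.castSucc)| / l (β j) = 0 := by
      intro j
      rw [hgapeq j (by rw [hJe]; exact Finset.notMem_empty j)]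
      simp
    rw [Finset.sum_congr rfl (fun j _ => hz j)]
    simp only [Finset.sum_const_zero]
    linarith
  have hJne : J.Nonempty := Finset.nonempty_iff_ne_empty.mpr hJe
  set gmin := J.inf' hJne (fun j => x j.succ - x j.castSucc) with hgmin
  have hgminpos : 0 < gmin := by
    rw [hgmin, Finset.lt_inf'_iff]
    intro j hj
    rw [hJdef, Finset.mem_filter] at hj
    linarith [hj.2]
  have hgmin_le : ∀ j ∈ J, gmin ≤ x j.succ - x j.castSucc := fun j hj =>
    Finset.inf'_le _ hj
  set η := gmin / 4 with hηdef
  have hηpos : 0 < η := by positivity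
  have hη4 : 4 * η = gmin := by rw [hηdef]; ring
  have hmain : ∀ ε : ℝ, 0 < ε →
      ∑ j : Fin m, |f (x j.succ) - f (x j.castSucc)| / l (β j)
        ≤ 4 * S.toReal + ε * (2 * m / l 0) := by
    intro ε hε
    choose u v hpkg using approx_pkg hf hε hηpos
    set U : Fin (m + 1) → ℝ := fun j => u (x j) with hU
    set V : Fin (m + 1) → ℝ := fun j => v (x j) with hV
    have hGu : ∀ j, GoodPt f (U j) := fun j => (hpkg (x j) (hmem j)).1
    have hGv : ∀ j, GoodPt f (V j) := fun j => (hpkg (x j) (hmem j)).2.1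
    have hUm : ∀ j, U j ∈ Set.Icc (0 : ℝ) 1 := fun j => (hpkg (x j) (hmem j)).2.2.1
    have hVm : ∀ j, V j ∈ Set.Icc (0 : ℝ) 1 := fun j => (hpkg (x j) (hmem j)).2.2.2.1
    have hUlt : ∀ j, x j - η < U j := fun j => (hpkg (x j) (hmem j)).2.2.2.2.1
    have hUle : ∀ j, U j ≤ x j := fun j => (hpkg (x j) (hmem j)).2.2.2.2.2.1
    have hVge : ∀ j, x j ≤ V j := fun j => (hpkg (x j) (hmem j)).2.2.2.2.2.2.1
    have hVlt : ∀ j, V j < x j + η := fun j => (hpkg (x j) (hmem j)).2.2.2.2.2.2.2.1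
    have hHull : ∀ j, ∀ c : ℝ, |c - f (x j)| ≤ max |c - f (U j)| |c - f (V j)| + ε :=
      fun j => (hpkg (x j) (hmem j)).2.2.2.2.2.2.2.2
    have hgap : ∀ j : Fin m, j ∈ J → x j.castSucc + 4 * η ≤ x j.succ := by
      intro j hj
      have := hgmin_le j hj
      rw [hη4]
      linarith
    have hUc : ∀ j : Fin m, U j.castSucc ≤ U j.succ := by
      intro j
      by_cases hj : j ∈ J
      · have h1 := hUle j.castSucc
        have h2 := hUlt j.succ
        have h3 := hgap j hj
        linarith [hηpos]
      · rw [hU]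
        simp only
        rw [hgapeq j hj]
    have hVc : ∀ j : Fin m, V j.castSucc ≤ V j.succ := by
      intro j
      by_cases hj : j ∈ J
      · have h1 := hVlt j.castSucc
        have h2 := hVge j.succ
        have h3 := hgap j hj
        linarith [hηpos]
      · rw [hV]
        simp only
        rw [hgapeq j hj]
    have hUmono : Monotone U := Fin.monotone_iff_le_succ.mpr hUc
    have hVmono : Monotone V := Fin.monotone_iff_le_succ.mpr hVc
    have hβinj : Function.Injective (fun j : Fin m => ((β j : Fin m) : ℕ)) := by
      intro a b hab
      exact β.injective (Fin.ext hab)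
    -- A1, A2
    have hA1 : ∑ i : Fin m, |f (U i.succ) - f (U i.castSucc)| / l (β i) ≤ S.toReal := by
      apply good_intervals_le hl hS hSne (fun i => U i.castSucc) (fun i => U i.succ)
        (fun i => hUmono (Fin.castSucc_le_succ i)) (fun i => hUm _) (fun i => hUm _)
        (fun i j hij => hUmono (Fin.succ_le_castSucc_iff.mpr hij))
        (fun i => hGu _) (fun i => hGu _) _ hβinj
    have hA2 : ∑ i : Fin m, |f (V i.succ) - f (V i.castSucc)| / l (β i) ≤ S.toReal := by
      apply good_intervals_le hl hS hSne (fun i => V i.castSucc) (fun i => V i.succ)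
        (fun i => hVmono (Fin.castSucc_le_succ i)) (fun i => hVm _) (fun i => hVm _)
        (fun i j hij => hVmono (Fin.succ_le_castSucc_iff.mpr hij))
        (fun i => hGv _) (fun i => hGv _) _ hβinj
    -- straddle families over J
    set e : Fin J.card ≃o ↥J := J.orderIsoOfFin rfl with he
    have heJ : ∀ i : Fin J.card, ((e i : Fin m)) ∈ J := fun i => (e i).2
    have hestrict : ∀ {i i' : Fin J.card}, i < i' → ((e i : Fin m)) < ((e i' : Fin m)) := by
      intro i i' hii
      exact_mod_cast e.strictMono hii
    have heβinj : Function.Injective (fun i : Fin J.card => ((β (e i : Fin m) : Fin m) : ℕ)) := by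
      intro a b hab
      have h1 : β (e a : Fin m) = β (e b : Fin m) := Fin.ext hab
      have h2 : (e a : Fin m) = (e b : Fin m) := β.injective h1
      exact e.toEquiv.injective (Subtype.ext h2)
    have horder : ∀ (i i' : Fin J.card), i < i' →
        x ((e i : Fin m)).succ ≤ x ((e i' : Fin m)).castSucc := by
      intro i i' hii
      exact hx (Fin.succ_le_castSucc_iff.mpr (hestrict hii))
    have hSB : ∑ i : Fin J.card,
        |f (V ((e i : Fin m)).castSucc) - f (U ((e i : Fin m)).castSucc)|
          / l (β (e i : Fin m)) ≤ S.toReal := by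
      apply good_intervals_le hl hS hSne
        (fun i => U ((e i : Fin m)).castSucc) (fun i => V ((e i : Fin m)).castSucc)
        (fun i => le_trans (hUle _) (hVge _)) (fun i => hUm _) (fun i => hVm _)
        ?_ (fun i => hGu _) (fun i => hGv _) _ heβinj
      intro i i' hii
      have h1 := hVlt ((e i : Fin m)).castSucc
      have h2 := hUlt ((e i' : Fin m)).castSucc
      have h3 := hgap _ (heJ i)
      have h4 := horder i i' hii
      linarith [hηpos]
    have hSC : ∑ i : Fin J.card,
        |f (V ((e i : Fin m)).succ) - f (U ((e i : Fin m)).succ)|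
          / l (β (e i : Fin m)) ≤ S.toReal := by
      apply good_intervals_le hl hS hSne
        (fun i => U ((e i : Fin m)).succ) (fun i => V ((e i : Fin m)).succ)
        (fun i => le_trans (hUle _) (hVge _)) (fun i => hUm _) (fun i => hVm _)
        ?_ (fun i => hGu _) (fun i => hGv _) _ heβinj
      intro i i' hii
      have h1 := hVlt ((e i : Fin m)).succ
      have h2 := hUlt ((e i' : Fin m)).succ
      have h3 := hgap _ (heJ i')
      have h4 := horder i i' hii
      linarith [hηpos]
    -- transfer to sums over J
    have hsum_e : ∀ F : Fin m → ℝ, ∑ j ∈ J, F j = ∑ i : Fin J.card, F ((e i : Fin m)) := by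
      intro F
      rw [← Finset.sum_coe_sort J F]
      exact (Equiv.sum_comp e.toEquiv (fun j : ↥J => F (j : Fin m))).symm
    have hSBJ : ∑ j ∈ J, |f (V j.castSucc) - f (U j.castSucc)| / l (β j) ≤ S.toReal := by
      rw [hsum_e (fun j => |f (V j.castSucc) - f (U j.castSucc)| / l (β j))]
      exact hSB
    have hSCJ : ∑ j ∈ J, |f (V j.succ) - f (U j.succ)| / l (β j) ≤ S.toReal := by
      rw [hsum_e (fun j => |f (V j.succ) - f (U j.succ)| / l (β j))]
      exact hSC
    -- epsilon sum
    have hJcard : (J.card : ℝ) ≤ (m : ℝ) := by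
      have := Finset.card_filter_le Finset.univ (fun j : Fin m => x j.castSucc < x j.succ)
      have h2 : (Finset.univ : Finset (Fin m)).card = m := by
        rw [Finset.card_univ, Fintype.card_fin]
      exact_mod_cast (by rw [hJdef]; omega : J.card ≤ m)
    have hepsum : ∑ j ∈ J, (2 * ε) / l (β j) ≤ ε * (2 * m / l 0) := by
      have h1 : ∀ j ∈ J, (2 * ε) / l (β j) ≤ (2 * ε) / l 0 := by
        intro j _
        exact div_le_div_of_nonneg_left (by linarith) hl0 (hl.1 (Nat.zero_le _))
      calc ∑ j ∈ J, (2 * ε) / l (β j) ≤ ∑ _j ∈ J, (2 * ε) / l 0 := Finset.sum_le_sum h1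
        _ = (J.card : ℝ) * ((2 * ε) / l 0) := by
            rw [Finset.sum_const, nsmul_eq_mul]
        _ ≤ (m : ℝ) * ((2 * ε) / l 0) := by
            apply mul_le_mul_of_nonneg_right hJcard (by positivity)
        _ = ε * (2 * m / l 0) := by
            field_simp
    -- termwise bound
    have hterm : ∀ j : Fin m, |f (x j.succ) - f (x j.castSucc)| / l (β j)
        ≤ |f (U j.succ) - f (U j.castSucc)| / l (β j)
          + |f (V j.succ) - f (V j.castSucc)| / l (β j)
          + (if j ∈ J then (|f (V j.castSucc) - f (U j.castSucc)|
              + |f (V j.succ) - f (U j.succ)| + 2 * ε) / l (β j) else 0) := by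
      intro j
      by_cases hj : j ∈ J
      · rw [if_pos hj]
        have h2h := two_hull (hHull j.castSucc) (hHull j.succ)
        have hlp := hl.2.1 ((β j : Fin m) : ℕ)
        rw [← add_div, ← add_div]
        apply div_le_div_of_nonneg_right ?_ hlp.le
        calc |f (x j.succ) - f (x j.castSucc)|
            ≤ |f (U j.succ) - f (U j.castSucc)| + |f (V j.succ) - f (V j.castSucc)|
              + |f (V j.castSucc) - f (U j.castSucc)| + |f (V j.succ) - f (U j.succ)|
              + 2 * ε := h2h
          _ = |f (U j.succ) - f (U j.castSucc)| + |f (V j.succ) - f (V j.castSucc)|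
              + (|f (V j.castSucc) - f (U j.castSucc)|
                + |f (V j.succ) - f (U j.succ)| + 2 * ε) := by ring
      · rw [if_neg hj, hgapeq j hj]
        simp only [sub_self, abs_zero, zero_div, add_zero]
        have hlp := hl.2.1 ((β j : Fin m) : ℕ)
        have n1 : 0 ≤ |f (U j.succ) - f (U j.castSucc)| / l (β j) :=
          div_nonneg (abs_nonneg _) hlp.le
        have n2 : 0 ≤ |f (V j.succ) - f (V j.castSucc)| / l (β j) :=
          div_nonneg (abs_nonneg _) hlp.le
        linarith
    -- assemble
    have hsplit : ∑ j : Fin m, (|f (U j.succ) - f (U j.castSucc)| / l (β j)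
          + |f (V j.succ) - f (V j.castSucc)| / l (β j)
          + (if j ∈ J then (|f (V j.castSucc) - f (U j.castSucc)|
              + |f (V j.succ) - f (U j.succ)| + 2 * ε) / l (β j) else 0))
        = (∑ j : Fin m, |f (U j.succ) - f (U j.castSucc)| / l (β j))
          + (∑ j : Fin m, |f (V j.succ) - f (V j.castSucc)| / l (β j))
          + ∑ j ∈ J, (|f (V j.castSucc) - f (U j.castSucc)|
              + |f (V j.succ) - f (U j.succ)| + 2 * ε) / l (β j) := by
      rw [Finset.sum_add_distrib, Finset.sum_add_distrib]
      congr 1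
      rw [Finset.sum_ite_mem, Finset.univ_inter]
    have hJsplit : ∑ j ∈ J, (|f (V j.castSucc) - f (U j.castSucc)|
          + |f (V j.succ) - f (U j.succ)| + 2 * ε) / l (β j)
        = (∑ j ∈ J, |f (V j.castSucc) - f (U j.castSucc)| / l (β j))
          + (∑ j ∈ J, |f (V j.succ) - f (U j.succ)| / l (β j))
          + ∑ j ∈ J, (2 * ε) / l (β j) := by
      rw [← Finset.sum_add_distrib, ← Finset.sum_add_distrib]
      apply Finset.sum_congr rfl
      intro j _
      rw [← add_div, ← add_div]
    calc ∑ j : Fin m, |f (x j.succ) - f (x j.castSucc)| / l (β j)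
        ≤ _ := Finset.sum_le_sum (fun j _ => hterm j)
      _ = _ := hsplit
      _ ≤ S.toReal + S.toReal + ((S.toReal + S.toReal) + ε * (2 * m / l 0)) := by
          rw [hJsplit]
          have := hepsum
          gcongr
      _ = 4 * S.toReal + ε * (2 * m / l 0) := by ring
  -- finish off the ε
  apply le_of_forall_pos_le_add
  intro ε' hε'
  set K := 2 * (m : ℝ) / l 0 with hK
  have hK0 : 0 ≤ K := by positivity
  have h1 := hmain (ε' / (K + 1)) (by positivity)
  have h2 : (ε' / (K + 1)) * K ≤ ε' := by
    rw [div_mul_eq_mul_div, div_le_iff₀ (by linarith)]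
    nlinarith
  linarith

end Part6

/-- If `Λ` is a Λ-sequence and `f ∈ 𝔄`, then `f` is of bounded Λ-variation
if and only if `sup_{n ≥ 1} ‖B_n f‖_Λ < ∞`. -/
theorem memA_lamBV_iff_bernstein_bounded (l : ℕ → ℝ) (hl : IsLambdaSeq l)
    (f : ℝ → ℝ) (hf : MemA f) :
    lamVar l f < ⊤ ↔ (⨆ (n : ℕ) (_ : 1 ≤ n), lamNorm l (bern n f)) < ⊤ := by
  constructor
  · intro h
    exact forward_dir hl f h
  · intro h
    exact backward_dir hl f hf h
end

section
/- Let Λ be a proper Λ-sequence. If f and f_k (k ∈ ℕ) are functions [0,1] → ℝ of bounded Λ-variation, each f_k is continuous in Λ-variation, and ‖f_k − f‖_Λ → 0 as k → ∞, then f is continuous in Λ-variation; moreover if in addition each f_k is continuous then so is f. Hence the functions continuous in Λ-variation, and the continuous functions continuous in Λ-variation, form closed subspaces of the space of functions of bounded Λ-variation with the norm ‖·‖_Λ. -/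
open Filter Set MeasureTheory
open scoped ENNReal Topology

lemma lamVarOn_le_iff {l : ℕ → ℝ} {f : ℝ → ℝ} {K : Set ℝ} {c : ℝ≥0∞} :
    lamVarOn l f K ≤ c ↔ ∀ (m : ℕ) (x : Fin (m + 1) → ℝ), Monotone x → (∀ j, x j ∈ K) →
      ∀ (β : Equiv.Perm (Fin m)),
        (∑ j : Fin m, ENNReal.ofReal (|f (x j.succ) - f (x j.castSucc)| / l (β j))) ≤ c := by
  simp [lamVarOn, iSup_le_iff]

lemma sum_le_lamVarOn (l : ℕ → ℝ) (f : ℝ → ℝ) (K : Set ℝ) (m : ℕ) (x : Fin (m + 1) → ℝ)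
    (hx : Monotone x) (hxK : ∀ j, x j ∈ K) (β : Equiv.Perm (Fin m)) :
    (∑ j : Fin m, ENNReal.ofReal (|f (x j.succ) - f (x j.castSucc)| / l (β j))) ≤
      lamVarOn l f K :=
  le_iSup_of_le m <| le_iSup_of_le x <| le_iSup_of_le hx <| le_iSup_of_le hxK <|
    le_iSup_of_le β le_rfl

lemma lamVarOn_add_le (l : ℕ → ℝ) (hl : ∀ n, 0 < l n) (g h : ℝ → ℝ) (K : Set ℝ) :
    lamVarOn l (fun x => g x + h x) K ≤ lamVarOn l g K + lamVarOn l h K := by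
  rw [lamVarOn_le_iff]
  intro m x hx hxK β
  have key : ∀ j : Fin m,
      ENNReal.ofReal (|(g (x j.succ) + h (x j.succ)) - (g (x j.castSucc) + h (x j.castSucc))| / l (β j)) ≤
      ENNReal.ofReal (|g (x j.succ) - g (x j.castSucc)| / l (β j)) +
      ENNReal.ofReal (|h (x j.succ) - h (x j.castSucc)| / l (β j)) := by
    intro j
    refine le_trans (ENNReal.ofReal_le_ofReal
      (show _ ≤ |g (x j.succ) - g (x j.castSucc)| / l (β j) +
        |h (x j.succ) - h (x j.castSucc)| / l (β j) from ?_)) ENNReal.ofReal_add_le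
    rw [← add_div]
    apply div_le_div_of_nonneg_right ?_ (hl (β j)).le
    have := abs_add_le (g (x j.succ) - g (x j.castSucc)) (h (x j.succ) - h (x j.castSucc))
    calc |(g (x j.succ) + h (x j.succ)) - (g (x j.castSucc) + h (x j.castSucc))|
        = |(g (x j.succ) - g (x j.castSucc)) + (h (x j.succ) - h (x j.castSucc))| := by ring_nf
      _ ≤ _ := this
  calc (∑ j : Fin m, ENNReal.ofReal (|(g (x j.succ) + h (x j.succ)) - (g (x j.castSucc) + h (x j.castSucc))| / l (β j)))
      ≤ ∑ j : Fin m, (ENNReal.ofReal (|g (x j.succ) - g (x j.castSucc)| / l (β j)) +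
          ENNReal.ofReal (|h (x j.succ) - h (x j.castSucc)| / l (β j))) :=
        Finset.sum_le_sum fun j _ => key j
    _ = (∑ j : Fin m, ENNReal.ofReal (|g (x j.succ) - g (x j.castSucc)| / l (β j))) +
        ∑ j : Fin m, ENNReal.ofReal (|h (x j.succ) - h (x j.castSucc)| / l (β j)) :=
        Finset.sum_add_distrib
    _ ≤ _ := add_le_add (sum_le_lamVarOn l g K m x hx hxK β) (sum_le_lamVarOn l h K m x hx hxK β)

lemma lamVarOn_neg (l : ℕ → ℝ) (g : ℝ → ℝ) (K : Set ℝ) :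
    lamVarOn l (fun x => -(g x)) K = lamVarOn l g K := by
  have key : ∀ (g : ℝ → ℝ) (a b : ℝ), |(-(g a)) - (-(g b))| = |g a - g b| := by
    intro g a b
    rw [neg_sub_neg, abs_sub_comm]
  apply le_antisymm
  · rw [lamVarOn_le_iff]
    intro m x hx hxK β
    simp only [key]
    exact sum_le_lamVarOn l g K m x hx hxK β
  · rw [lamVarOn_le_iff]
    intro m x hx hxK β
    refine le_trans (le_of_eq ?_) (sum_le_lamVarOn l (fun x => -(g x)) K m x hx hxK β)
    simp only [key]

lemma lamVar_shift_le (l : ℕ → ℝ) (hmono : Monotone l) (hpos : ∀ n, 0 < l n) (m : ℕ)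
    (g : ℝ → ℝ) : lamVar (fun n => l (n + m)) g ≤ lamVar l g := by
  rw [lamVar, lamVarOn_le_iff]
  intro k x hx hxK β
  refine le_trans (Finset.sum_le_sum fun j _ => ?_) (sum_le_lamVarOn l g _ k x hx hxK β)
  exact ENNReal.ofReal_le_ofReal (div_le_div_of_nonneg_left (abs_nonneg _) (hpos _)
    (hmono (Nat.le_add_right _ _)))

lemma eval_le_lamVar (l : ℕ → ℝ) (g : ℝ → ℝ) {x : ℝ} (hx : x ∈ Set.Icc (0:ℝ) 1) :
    ENNReal.ofReal (|g x - g 0| / l 0) ≤ lamVar l g := by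
  have h := sum_le_lamVarOn l g (Set.Icc 0 1) 1 ![0, x]
    (by
      intro i j hij
      fin_cases i <;> fin_cases j <;>
        simp_all [Fin.le_def])
    (by
      intro j
      fin_cases j <;> simp [hx.1, hx.2, Set.mem_Icc, hx])
    (Equiv.refl _)
  simpa [lamVar] using h


/-- If `Λ` is a proper Λ-sequence, `f, fₖ ∈ ΛBV`, each `fₖ` is continuous in
Λ-variation, and `‖fₖ - f‖_Λ → 0`, then `f` is continuous in Λ-variation; moreover if each
`fₖ` is continuous, so is `f`. Hence `ΛBV_c` and `CΛBV_c` are closed subspaces of `ΛBV`. -/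
theorem contInLamVar_closed (l : ℕ → ℝ) (hl : IsProperLambdaSeq l)
    (F : ℕ → ℝ → ℝ) (f : ℝ → ℝ)
    (hF : ∀ k, lamVar l (F k) < ⊤) (hf : lamVar l f < ⊤)
    (hFc : ∀ k, ContInLamVar l (F k))
    (hconv : Tendsto (fun k => lamNorm l (fun x => F k x - f x)) atTop (𝓝 0)) :
    ContInLamVar l f ∧
    ((∀ k, ContinuousOn (F k) (Set.Icc 0 1)) → ContinuousOn f (Set.Icc 0 1)) := by
  obtain ⟨⟨hmono, hpos, _⟩, _⟩ := hl
  have hvar_le_norm : ∀ g : ℝ → ℝ, lamVar l g ≤ lamNorm l g := fun g => self_le_add_right _ _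
  constructor
  · rw [ContInLamVar, ENNReal.tendsto_nhds_zero]
    intro ε hε
    obtain ⟨k, hk⟩ := (ENNReal.tendsto_nhds_zero.1 hconv (ε / 2) (ENNReal.half_pos hε.ne')).exists
    filter_upwards [ENNReal.tendsto_nhds_zero.1 (hFc k) (ε / 2) (ENNReal.half_pos hε.ne')]
      with m hm
    have h1 : lamVar (fun n => l (n + m)) f ≤
        lamVar (fun n => l (n + m)) (fun x => f x - F k x) +
        lamVar (fun n => l (n + m)) (F k) := by
      have := lamVarOn_add_le (fun n => l (n + m)) (fun n => hpos _)
        (fun x => f x - F k x) (F k) (Set.Icc 0 1)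
      simpa [lamVar] using this
    have h2 : lamVar (fun n => l (n + m)) (fun x => f x - F k x) =
        lamVar (fun n => l (n + m)) (fun x => F k x - f x) := by
      have := lamVarOn_neg (fun n => l (n + m)) (fun x => F k x - f x) (Set.Icc 0 1)
      simpa [lamVar, neg_sub] using this
    have h3 : lamVar (fun n => l (n + m)) (fun x => F k x - f x) ≤
        lamVar l (fun x => F k x - f x) := lamVar_shift_le l hmono hpos m _
    calc lamVar (fun n => l (n + m)) f
        ≤ lamVar (fun n => l (n + m)) (fun x => f x - F k x) +
          lamVar (fun n => l (n + m)) (F k) := h1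
      _ ≤ lamNorm l (fun x => F k x - f x) + ε / 2 := by
          refine add_le_add (le_trans (h2 ▸ h3) (hvar_le_norm _)) hm
      _ ≤ ε / 2 + ε / 2 := add_le_add_left hk _
      _ = ε := ENNReal.add_halves ε
  · intro hcont
    have hL0 : (0:ℝ) < l 0 := hpos 0
    have hunif : TendstoUniformlyOn F f atTop (Set.Icc 0 1) := by
      rw [Metric.tendstoUniformlyOn_iff]
      intro ε hε
      set c : ℝ := ε / (2 * (1 + l 0)) with hc_def
      have hc : 0 < c := by positivity
      filter_upwards [ENNReal.tendsto_nhds_zero.1 hconv (ENNReal.ofReal c)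
        (ENNReal.ofReal_pos.2 hc)] with k hk
      intro x hx
      set g : ℝ → ℝ := fun x => F k x - f x with hg_def
      have hg0 : |g 0| ≤ c := by
        have h := le_trans (le_add_self : ENNReal.ofReal |g 0| ≤ lamNorm l g) hk
        exact (ENNReal.ofReal_le_ofReal_iff hc.le).1 h
      have hgx : |g x - g 0| ≤ c * l 0 := by
        have h := le_trans (le_trans (eval_le_lamVar l g hx) (hvar_le_norm g)) hk
        have h' := (ENNReal.ofReal_le_ofReal_iff hc.le).1 h
        calc |g x - g 0| = |g x - g 0| / l 0 * l 0 := by field_simp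
          _ ≤ c * l 0 := by apply mul_le_mul_of_nonneg_right h' hL0.le
      have : dist (f x) (F k x) = |g x| := by
        rw [Real.dist_eq, hg_def]
        simp [abs_sub_comm]
      rw [this]
      have : |g x| ≤ c * (1 + l 0) := by
        calc |g x| ≤ |g 0| + |g x - g 0| := by
              have := abs_add_le (g 0) (g x - g 0); simpa using this
          _ ≤ c + c * l 0 := add_le_add hg0 hgx
          _ = c * (1 + l 0) := by ring
      have hce : c * (1 + l 0) = ε / 2 := by
        rw [hc_def]; field_simp
      linarith [half_lt_self hε]
    exact hunif.continuousOn (Filter.Eventually.of_forall hcont).frequently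
end

section
/- Let Λ be a proper Λ-sequence. A function f : [0,1] → ℝ is continuous, of bounded Λ-variation and continuous in Λ-variation if and only if for every ε > 0 there exists a real polynomial p such that ‖f − p‖_Λ < ε (p viewed as a function on [0,1]); that is, the space CΛBV_c is the closure of the space of polynomials in the ‖·‖_Λ norm. -/
open Filter Set MeasureTheory
open scoped ENNReal Topology

lemma sum_le_lamVar (l : ℕ → ℝ) (f : ℝ → ℝ) {m : ℕ} (x : Fin (m+1) → ℝ)
    (hx : Monotone x) (hK : ∀ j, x j ∈ Set.Icc (0:ℝ) 1) (β : Equiv.Perm (Fin m)) :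
    ∑ j : Fin m, ENNReal.ofReal (|f (x j.succ) - f (x j.castSucc)| / l (β j)) ≤ lamVar l f := by
  unfold lamVar lamVarOn
  exact le_iSup_of_le m (le_iSup_of_le x (le_iSup_of_le hx (le_iSup_of_le hK
    (le_iSup_of_le β le_rfl))))

lemma lamVar_le (l : ℕ → ℝ) (f : ℝ → ℝ) {C : ℝ≥0∞}
    (h : ∀ (m : ℕ) (x : Fin (m+1) → ℝ), Monotone x → (∀ j, x j ∈ Set.Icc (0:ℝ) 1) →
      ∀ β : Equiv.Perm (Fin m),
      ∑ j : Fin m, ENNReal.ofReal (|f (x j.succ) - f (x j.castSucc)| / l (β j)) ≤ C) :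
    lamVar l f ≤ C := by
  unfold lamVar lamVarOn
  exact iSup_le fun m => iSup_le fun x => iSup_le fun hx => iSup_le fun hK =>
    iSup_le fun β => h m x hx hK β

lemma fin_telescope {m : ℕ} (x : Fin (m+1) → ℝ) :
    ∑ j : Fin m, (x j.succ - x j.castSucc) = x (Fin.last m) - x 0 := by
  induction m with
  | zero => simp
  | succ m ih =>
    rw [Fin.sum_univ_castSucc]
    simp only [Fin.succ_castSucc]
    have h := ih (fun j => x j.castSucc)
    rw [h, Fin.succ_last, Fin.castSucc_zero]
    ring

lemma lamVar_congr (l : ℕ → ℝ) {f g : ℝ → ℝ}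
    (h : ∀ x ∈ Set.Icc (0:ℝ) 1, f x = g x) : lamVar l f = lamVar l g := by
  have key : ∀ (f g : ℝ → ℝ), (∀ x ∈ Set.Icc (0:ℝ) 1, f x = g x) → lamVar l f ≤ lamVar l g := by
    intro f g h
    refine lamVar_le l f fun m x hx hK β => ?_
    have : ∀ j : Fin m, |f (x j.succ) - f (x j.castSucc)| = |g (x j.succ) - g (x j.castSucc)| := by
      intro j; rw [h _ (hK _), h _ (hK _)]
    simp only [this]
    exact sum_le_lamVar l g x hx hK β
  exact le_antisymm (key f g h) (key g f fun x hx => (h x hx).symm)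

lemma lamVar_neg (l : ℕ → ℝ) (f : ℝ → ℝ) :
    lamVar l (fun x => -f x) = lamVar l f := by
  have key : ∀ f : ℝ → ℝ, lamVar l (fun x => -f x) ≤ lamVar l f := by
    intro f
    refine lamVar_le l _ fun m x hx hK β => ?_
    have : ∀ j : Fin m, |(-f (x j.succ)) - (-f (x j.castSucc))| = |f (x j.succ) - f (x j.castSucc)| := by
      intro j; rw [← abs_neg]; ring_nf
    simp only [this]
    exact sum_le_lamVar l f x hx hK β
  refine le_antisymm (key f) ?_
  have := key (fun x => -f x)
  simpa using this

lemma lamVar_add_le (l : ℕ → ℝ) (hl0 : ∀ n, 0 < l n) (f g : ℝ → ℝ) :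
    lamVar l (fun x => f x + g x) ≤ lamVar l f + lamVar l g := by
  refine lamVar_le l _ fun m x hx hK β => ?_
  calc ∑ j : Fin m, ENNReal.ofReal (|(f (x j.succ) + g (x j.succ)) - (f (x j.castSucc) + g (x j.castSucc))| / l (β j))
      ≤ ∑ j : Fin m, (ENNReal.ofReal (|f (x j.succ) - f (x j.castSucc)| / l (β j))
          + ENNReal.ofReal (|g (x j.succ) - g (x j.castSucc)| / l (β j))) := by
        refine Finset.sum_le_sum fun j _ => ?_
        have h0 := (hl0 (β j)).le
        rw [← ENNReal.ofReal_add (div_nonneg (abs_nonneg _) h0) (div_nonneg (abs_nonneg _) h0),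
          ← add_div]
        refine ENNReal.ofReal_le_ofReal ?_
        have hpos := hl0 (β j)
        gcongr
        calc |(f (x j.succ) + g (x j.succ)) - (f (x j.castSucc) + g (x j.castSucc))|
            = |(f (x j.succ) - f (x j.castSucc)) + (g (x j.succ) - g (x j.castSucc))| := by ring_nf
          _ ≤ _ := abs_add_le _ _
    _ = _ + _ := Finset.sum_add_distrib
    _ ≤ lamVar l f + lamVar l g :=
        add_le_add (sum_le_lamVar l f x hx hK β) (sum_le_lamVar l g x hx hK β)

lemma lamVar_sub_le (l : ℕ → ℝ) (hl0 : ∀ n, 0 < l n) (f g : ℝ → ℝ) :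
    lamVar l (fun x => f x - g x) ≤ lamVar l f + lamVar l g := by
  have : (fun x => f x - g x) = fun x => f x + (-g x) := by funext x; ring
  rw [this]
  calc lamVar l (fun x => f x + (-g x)) ≤ lamVar l f + lamVar l (fun x => -g x) :=
        lamVar_add_le l hl0 f _
    _ = lamVar l f + lamVar l g := by rw [lamVar_neg]

lemma lamVar_anti (l l' : ℕ → ℝ) (f : ℝ → ℝ) (hl0 : ∀ n, 0 < l n)
    (h : ∀ n, l n ≤ l' n) : lamVar l' f ≤ lamVar l f := by
  refine lamVar_le l' f fun m x hx hK β => ?_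
  refine le_trans (Finset.sum_le_sum fun j _ => ?_) (sum_le_lamVar l f x hx hK β)
  exact ENNReal.ofReal_le_ofReal (div_le_div_of_nonneg_left (abs_nonneg _) (hl0 _) (h _))

lemma lamVar_le_of_lip (l : ℕ → ℝ) (hl0 : ∀ n, 0 < l n) (hlm : Monotone l)
    (f : ℝ → ℝ) (C : ℝ) (hC : 0 ≤ C)
    (hf : ∀ x ∈ Set.Icc (0:ℝ) 1, ∀ y ∈ Set.Icc (0:ℝ) 1, x ≤ y → |f y - f x| ≤ C * (y - x)) :
    lamVar l f ≤ ENNReal.ofReal (C / l 0) := by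
  refine lamVar_le l f fun m x hx hK β => ?_
  have step : ∀ j : Fin m, ENNReal.ofReal (|f (x j.succ) - f (x j.castSucc)| / l (β j))
      ≤ ENNReal.ofReal (C * (x j.succ - x j.castSucc) / l 0) := by
    intro j
    refine ENNReal.ofReal_le_ofReal ?_
    have h1 : |f (x j.succ) - f (x j.castSucc)| ≤ C * (x j.succ - x j.castSucc) :=
      hf _ (hK _) _ (hK _) (hx (Fin.castSucc_lt_succ (i := j)).le)
    calc |f (x j.succ) - f (x j.castSucc)| / l (β j)
        ≤ |f (x j.succ) - f (x j.castSucc)| / l 0 :=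
          div_le_div_of_nonneg_left (abs_nonneg _) (hl0 0) (hlm (Nat.zero_le _))
      _ ≤ C * (x j.succ - x j.castSucc) / l 0 := by
          have h0 : (0:ℝ) < l 0 := hl0 0
          gcongr
  calc ∑ j : Fin m, ENNReal.ofReal (|f (x j.succ) - f (x j.castSucc)| / l (β j))
      ≤ ∑ j : Fin m, ENNReal.ofReal (C * (x j.succ - x j.castSucc) / l 0) :=
        Finset.sum_le_sum fun j _ => step j
    _ = ENNReal.ofReal (∑ j : Fin m, C * (x j.succ - x j.castSucc) / l 0) := by
        rw [ENNReal.ofReal_sum_of_nonneg]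
        intro j _
        have h1 := hx (Fin.castSucc_lt_succ (i := j)).le
        exact div_nonneg (mul_nonneg hC (by linarith)) (hl0 0).le
    _ ≤ ENNReal.ofReal (C / l 0) := by
        refine ENNReal.ofReal_le_ofReal ?_
        have hsum : ∑ j : Fin m, C * (x j.succ - x j.castSucc) / l 0
            = C * (x (Fin.last m) - x 0) / l 0 := by
          rw [← fin_telescope x, Finset.mul_sum, Finset.sum_div]
        rw [hsum]
        have h01 : x (Fin.last m) - x 0 ≤ 1 := by
          have h1 := (hK (Fin.last m)).2
          have h2 := (hK 0).1
          linarith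
        have : C * (x (Fin.last m) - x 0) ≤ C * 1 := by
          have h0 : 0 ≤ x (Fin.last m) - x 0 := by
            have := hx (Fin.zero_le (Fin.last m)); linarith
          nlinarith
        have h0 : (0:ℝ) < l 0 := hl0 0
        have hnum : C * (x (Fin.last m) - x 0) ≤ C := by linarith
        gcongr

lemma pair_le_lamVar (l : ℕ → ℝ) (f : ℝ → ℝ) {x y : ℝ} (hx : x ∈ Set.Icc (0:ℝ) 1)
    (hy : y ∈ Set.Icc (0:ℝ) 1) (hxy : x ≤ y) :
    ENNReal.ofReal (|f y - f x| / l 0) ≤ lamVar l f := by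
  set X : Fin 2 → ℝ := fun i => if i = 0 then x else y with hX
  have hmono : Monotone X := by
    intro a b hab
    fin_cases a <;> fin_cases b <;> simp_all [X]
  have hK : ∀ j, X j ∈ Set.Icc (0:ℝ) 1 := by
    intro j; fin_cases j <;> simp [X, hx.1, hx.2, hy.1, hy.2]
  have h := sum_le_lamVar l f X hmono hK (Equiv.refl _)
  simpa [X] using h

lemma lamVar_split (l : ℕ → ℝ) (hl0 : ∀ n, 0 < l n) (f : ℝ → ℝ) (B : ℝ) (hB0 : 0 ≤ B)
    (hB : ∀ x ∈ Set.Icc (0:ℝ) 1, |f x| ≤ B) (M : ℕ) :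
    lamVar l f ≤ ENNReal.ofReal (∑ i ∈ Finset.range M, 2 * B / l i)
      + lamVar (fun n => l (n + M)) f := by
  classical
  refine lamVar_le l f fun m x hx hK β => ?_
  set P : Fin m → Prop := fun j => (β j : ℕ) < M with hPdef
  rw [← Finset.sum_filter_add_sum_filter_not Finset.univ P]
  refine add_le_add ?_ ?_
  · calc ∑ j ∈ Finset.filter P Finset.univ,
          ENNReal.ofReal (|f (x j.succ) - f (x j.castSucc)| / l (β j))
        ≤ ∑ j ∈ Finset.filter P Finset.univ, ENNReal.ofReal (2 * B / l (β j)) := by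
          refine Finset.sum_le_sum fun j _ => ENNReal.ofReal_le_ofReal ?_
          have h1 : |f (x j.succ) - f (x j.castSucc)| ≤ 2 * B := by
            calc |f (x j.succ) - f (x j.castSucc)|
                ≤ |f (x j.succ)| + |f (x j.castSucc)| := abs_sub _ _
              _ ≤ B + B := add_le_add (hB _ (hK _)) (hB _ (hK _))
              _ = 2 * B := by ring
          have h0 := hl0 (β j)
          gcongr
      _ = ∑ i ∈ (Finset.filter P Finset.univ).image (fun j => (β j : ℕ)),
            ENNReal.ofReal (2 * B / l i) := by
          rw [Finset.sum_image]
          intro a _ b _ hab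
          exact β.injective (Fin.val_injective hab)
      _ ≤ ∑ i ∈ Finset.range M, ENNReal.ofReal (2 * B / l i) := by
          refine Finset.sum_le_sum_of_subset ?_
          intro i hi
          simp only [Finset.mem_image, Finset.mem_filter] at hi
          obtain ⟨j, ⟨_, hj⟩, rfl⟩ := hi
          exact Finset.mem_range.mpr hj
      _ = ENNReal.ofReal (∑ i ∈ Finset.range M, 2 * B / l i) := by
          rw [ENNReal.ofReal_sum_of_nonneg]
          intro i _
          exact div_nonneg (by linarith) (hl0 i).le
  · have hlt : ∀ j : Fin m, ¬ P j → (β j : ℕ) - M < m := by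
      intro j _
      have := (β j).isLt
      omega
    set e0 : {j : Fin m // ¬ P j} → Fin m := fun j => ⟨(β j.1 : ℕ) - M, hlt j.1 j.2⟩ with he0
    have he : Function.Injective e0 := by
      intro a b hab
      have h1 : (β a.1 : ℕ) - M = (β b.1 : ℕ) - M := congrArg Fin.val hab
      have ha : ¬ ((β a.1 : ℕ) < M) := a.2
      have hb : ¬ ((β b.1 : ℕ) < M) := b.2
      have h2 : (β a.1 : ℕ) = (β b.1 : ℕ) := by omega
      exact Subtype.ext (β.injective (Fin.val_injective h2))
    set β' := (Equiv.ofInjective e0 he).extendSubtype with hβ'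
    have hβ'app : ∀ (j : Fin m), ¬ P j → (β' j : ℕ) = (β j : ℕ) - M := by
      intro j hj
      have h4 : β' j = ((Equiv.ofInjective e0 he) ⟨j, hj⟩ : Fin m) :=
        Equiv.extendSubtype_apply_of_mem (Equiv.ofInjective e0 he) j hj
      rw [h4]
      simp [e0]
    have key : ∀ j ∈ Finset.filter (fun j => ¬ P j) Finset.univ,
        ENNReal.ofReal (|f (x j.succ) - f (x j.castSucc)| / l (β j))
        = ENNReal.ofReal (|f (x j.succ) - f (x j.castSucc)| / l ((β' j : ℕ) + M)) := by
      intro j hj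
      simp only [Finset.mem_filter] at hj
      have h2 := hβ'app j hj.2
      have h3 : ¬ ((β j : ℕ) < M) := hj.2
      have h5 : ((β' j : ℕ) + M) = (β j : ℕ) := by omega
      rw [h5]
    calc ∑ j ∈ Finset.filter (fun j => ¬ P j) Finset.univ,
          ENNReal.ofReal (|f (x j.succ) - f (x j.castSucc)| / l (β j))
        = ∑ j ∈ Finset.filter (fun j => ¬ P j) Finset.univ,
          ENNReal.ofReal (|f (x j.succ) - f (x j.castSucc)| / l ((β' j : ℕ) + M)) :=
          Finset.sum_congr rfl key
      _ ≤ ∑ j : Fin m,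
          ENNReal.ofReal (|f (x j.succ) - f (x j.castSucc)| / l ((β' j : ℕ) + M)) :=
          Finset.sum_le_sum_of_subset (Finset.subset_univ _)
      _ ≤ lamVar (fun n => l (n + M)) f := sum_le_lamVar (fun n => l (n + M)) f x hx hK β'

set_option maxHeartbeats 1000000 in
lemma lamVar_avg (l : ℕ → ℝ) (hl0 : ∀ n, 0 < l n) (F : ℝ → ℝ) (hF : Continuous F)
    (hclamp : ∀ y : ℝ, F (max 0 (min y 1)) = F y)
    (δ : ℝ) (hδ : 0 < δ) (hfin : lamVar l F ≠ ⊤) :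
    lamVar l (fun z => (∫ t in (0:ℝ)..δ, F (z + t)) / δ) ≤ lamVar l F := by
  set R : ℝ := (lamVar l F).toReal with hR
  set g : ℝ → ℝ := fun z => (∫ t in (0:ℝ)..δ, F (z + t)) / δ with hgdef
  have hgd : ∀ a : ℝ, g a = (∫ t in (0:ℝ)..δ, F (a + t)) / δ := fun a => rfl
  have hcont : ∀ a : ℝ, Continuous fun t : ℝ => F (a + t) :=
    fun a => hF.comp (continuous_const.add continuous_id)
  have hint : ∀ a : ℝ, IntervalIntegrable (fun t => F (a + t)) volume 0 δ :=
    fun a => (hcont a).intervalIntegrable 0 δ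
  refine lamVar_le l g fun m x hx hK β => ?_
  have htrans : ∀ t : ℝ,
      ∑ j : Fin m, |F (x j.succ + t) - F (x j.castSucc + t)| / l (β j) ≤ R := by
    intro t
    set c : Fin (m+1) → ℝ := fun j => max 0 (min (x j + t) 1) with hc
    have hcm : Monotone c := fun a b hab =>
      max_le_max le_rfl (min_le_min (by have := hx hab; linarith) le_rfl)
    have hcK : ∀ j, c j ∈ Set.Icc (0:ℝ) 1 :=
      fun j => ⟨le_max_left _ _, max_le (by norm_num) (min_le_right _ _)⟩
    have hsum := sum_le_lamVar l F c hcm hcK β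
    have heq : ∀ j : Fin (m+1), F (c j) = F (x j + t) := fun j => hclamp _
    simp only [heq] at hsum
    have h2 : ENNReal.ofReal (∑ j : Fin m, |F (x j.succ + t) - F (x j.castSucc + t)| / l (β j))
        ≤ lamVar l F := by
      rw [ENNReal.ofReal_sum_of_nonneg (fun j _ => div_nonneg (abs_nonneg _) (hl0 _).le)]
      exact hsum
    exact (ENNReal.ofReal_le_iff_le_toReal hfin).mp h2
  have key : ∀ j : Fin m, |g (x j.succ) - g (x j.castSucc)| / l (β j)
      ≤ (∫ t in (0:ℝ)..δ, |F (x j.succ + t) - F (x j.castSucc + t)|) / (l (β j) * δ) := by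
    intro j
    have hd : g (x j.succ) - g (x j.castSucc)
        = (∫ t in (0:ℝ)..δ, (F (x j.succ + t) - F (x j.castSucc + t))) / δ := by
      rw [hgd, hgd, div_sub_div_same, intervalIntegral.integral_sub (hint _) (hint _)]
    have h1 : |∫ t in (0:ℝ)..δ, (F (x j.succ + t) - F (x j.castSucc + t))|
        ≤ ∫ t in (0:ℝ)..δ, |F (x j.succ + t) - F (x j.castSucc + t)| := by
      have := intervalIntegral.norm_integral_le_integral_norm (μ := volume)
        (f := fun t => F (x j.succ + t) - F (x j.castSucc + t)) hδ.le
      simpa [Real.norm_eq_abs] using this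
    rw [hd, abs_div, abs_of_pos hδ, div_div, mul_comm δ (l (β j))]
    have hpos : 0 < l (β j) * δ := mul_pos (hl0 _) hδ
    gcongr
  have hT : ∑ j : Fin m, |g (x j.succ) - g (x j.castSucc)| / l (β j) ≤ R := by
    set φ : Fin m → ℝ → ℝ :=
      fun j t => |F (x j.succ + t) - F (x j.castSucc + t)| / (l (β j) * δ) with hφ
    have hφc : ∀ j : Fin m, Continuous (φ j) := fun j =>
      (((hcont (x j.succ)).sub (hcont (x j.castSucc))).abs).div_const _
    have hInt : ∀ j : Fin m, IntervalIntegrable (φ j) volume 0 δ := fun j =>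
      (hφc j).intervalIntegrable 0 δ
    have hIntSum : IntervalIntegrable (fun t => ∑ j : Fin m, φ j t) volume 0 δ := by
      apply Continuous.intervalIntegrable
      exact continuous_finset_sum _ fun j _ => hφc j
    have step1 : ∀ j : Fin m, |g (x j.succ) - g (x j.castSucc)| / l (β j)
        ≤ ∫ t in (0:ℝ)..δ, φ j t := by
      intro j
      simp only [hφ]
      rw [intervalIntegral.integral_div]
      exact key j
    have step2 : (∫ t in (0:ℝ)..δ, ∑ j : Fin m, φ j t) ≤ ∫ t in (0:ℝ)..δ, R / δ := by
      refine intervalIntegral.integral_mono_on hδ.le hIntSum intervalIntegrable_const ?_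
      intro t _
      have e1 : ∑ j : Fin m, φ j t
          = (∑ j : Fin m, |F (x j.succ + t) - F (x j.castSucc + t)| / l (β j)) / δ := by
        rw [Finset.sum_div]
        refine Finset.sum_congr rfl fun j _ => ?_
        simp only [hφ]
        rw [div_div]
      rw [e1]
      gcongr
      exact htrans t
    calc ∑ j : Fin m, |g (x j.succ) - g (x j.castSucc)| / l (β j)
        ≤ ∑ j : Fin m, ∫ t in (0:ℝ)..δ, φ j t := Finset.sum_le_sum fun j _ => step1 j
      _ = ∫ t in (0:ℝ)..δ, ∑ j : Fin m, φ j t :=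
          (intervalIntegral.integral_finset_sum fun j _ => hInt j).symm
      _ ≤ ∫ t in (0:ℝ)..δ, R / δ := step2
      _ = R := by
          rw [intervalIntegral.integral_const, smul_eq_mul, sub_zero, mul_comm,
            div_mul_cancel₀ _ hδ.ne']
  calc ∑ j : Fin m, ENNReal.ofReal (|g (x j.succ) - g (x j.castSucc)| / l (β j))
      = ENNReal.ofReal (∑ j : Fin m, |g (x j.succ) - g (x j.castSucc)| / l (β j)) :=
        (ENNReal.ofReal_sum_of_nonneg fun j _ => div_nonneg (abs_nonneg _) (hl0 _).le).symm
    _ ≤ ENNReal.ofReal R := ENNReal.ofReal_le_ofReal hT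
    _ ≤ lamVar l F := ENNReal.ofReal_toReal_le



lemma lip_bound (h h' : ℝ → ℝ) (C : ℝ)
    (hd : ∀ z : ℝ, HasDerivAt h (h' z) z)
    (hb : ∀ z ∈ Set.Icc (0:ℝ) 1, |h' z| ≤ C) :
    ∀ x ∈ Set.Icc (0:ℝ) 1, ∀ y ∈ Set.Icc (0:ℝ) 1, x ≤ y → |h y - h x| ≤ C * (y - x) := by
  intro x hx y hy hxy
  have key := Convex.norm_image_sub_le_of_norm_hasDerivWithin_le
    (f := h) (f' := h') (s := Set.Icc 0 1)
    (fun z hz => (hd z).hasDerivWithinAt)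
    (fun z hz => by simpa [Real.norm_eq_abs] using hb z hz)
    (convex_Icc 0 1) hx hy
  rw [Real.norm_eq_abs, Real.norm_eq_abs, abs_of_nonneg (by linarith : (0:ℝ) ≤ y - x)] at key
  exact key

lemma poly_lip (p : Polynomial ℝ) : ∃ C : ℝ, 0 ≤ C ∧
    ∀ x ∈ Set.Icc (0:ℝ) 1, ∀ y ∈ Set.Icc (0:ℝ) 1, x ≤ y →
      |p.eval y - p.eval x| ≤ C * (y - x) := by
  obtain ⟨C, hC⟩ := (isCompact_Icc (a := (0:ℝ)) (b := 1)).exists_bound_of_continuousOn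
    (p.derivative.continuous).continuousOn
  refine ⟨max C 0, le_max_right _ _, ?_⟩
  refine lip_bound _ (fun z => p.derivative.eval z) _ (fun z => p.hasDerivAt z) ?_
  intro z hz
  exact le_trans (by simpa [Real.norm_eq_abs] using hC z hz) (le_max_left _ _)

noncomputable def pint (r : Polynomial ℝ) : Polynomial ℝ :=
  r.sum fun i a => Polynomial.C (a / (i+1)) * Polynomial.X ^ (i+1)

lemma pint_deriv (r : Polynomial ℝ) : Polynomial.derivative (pint r) = r := by
  unfold pint
  rw [Polynomial.sum, map_sum]
  conv_rhs => rw [← Polynomial.sum_C_mul_X_pow_eq r]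
  rw [Polynomial.sum]
  refine Finset.sum_congr rfl fun n _ => ?_
  rw [Polynomial.derivative_C_mul_X_pow]
  have h2 : (r.coeff n / ((n:ℝ)+1) * ((n:ℝ)+1)) = r.coeff n := by
    have h : ((n:ℝ)+1) ≠ 0 := by positivity
    field_simp
  norm_num
  rw [show ((n : Polynomial ℝ) + 1) = Polynomial.C ((n:ℝ)+1) by simp, ← map_mul, h2]

/-- If `Λ` is a proper Λ-sequence, then `f : [0,1] → ℝ` is continuous, of
bounded Λ-variation and continuous in Λ-variation iff `f` can be approximated in the
`‖·‖_Λ` norm by polynomials: `CΛBV_c` is the closure of the polynomials in `‖·‖_Λ`. -/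
theorem cLamBVc_eq_closure_polynomials (l : ℕ → ℝ) (hl : IsProperLambdaSeq l)
    (f : ℝ → ℝ) :
    (ContinuousOn f (Set.Icc 0 1) ∧ lamVar l f < ⊤ ∧ ContInLamVar l f) ↔
      ∀ ε : ℝ, 0 < ε → ∃ p : Polynomial ℝ,
        lamNorm l (fun x => f x - p.eval x) < ENNReal.ofReal ε := by
  obtain ⟨⟨hlm, hl0, _⟩, hltop⟩ := hl
  have hpoly : ∀ p : Polynomial ℝ, ∃ C : ℝ, 0 ≤ C ∧ ∀ M : ℕ,
      lamVar (fun n => l (n + M)) (fun z => p.eval z) ≤ ENNReal.ofReal (C / l M) := by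
    intro p
    obtain ⟨C, hC0, hCl⟩ := poly_lip p
    refine ⟨C, hC0, fun M => ?_⟩
    have hres := lamVar_le_of_lip (fun n => l (n + M)) (fun n => hl0 _)
      (fun a b hab => hlm (by omega)) _ C hC0 hCl
    simpa [Nat.zero_add] using hres
  constructor
  · rintro ⟨hfc, hfin, hciv⟩ ε hε
    have h5 : (0:ℝ) < ε/5 := by linarith
    have hclamp_mem : ∀ y : ℝ, max 0 (min y 1) ∈ Set.Icc (0:ℝ) 1 := fun y =>
      ⟨le_max_left _ _, max_le (by norm_num) (min_le_right _ _)⟩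
    set F : ℝ → ℝ := fun y => f (max 0 (min y 1)) with hFdef
    have hclamp_cont : Continuous fun y : ℝ => max 0 (min y 1) :=
      continuous_const.max (continuous_id.min continuous_const)
    have hFc : Continuous F := hfc.comp_continuous hclamp_cont hclamp_mem
    have hclamp_id : ∀ y ∈ Set.Icc (0:ℝ) 1, max 0 (min y 1) = y := by
      intro y hy
      rw [min_eq_left hy.2, max_eq_right hy.1]
    have hFf : ∀ y ∈ Set.Icc (0:ℝ) 1, F y = f y := by
      intro y hy
      simp only [hFdef]
      rw [hclamp_id y hy]
    have hclamp2 : ∀ y : ℝ, F (max 0 (min y 1)) = F y := by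
      intro y
      simp only [hFdef]
      rw [hclamp_id _ (hclamp_mem y)]
    obtain ⟨M, hM⟩ := (hciv.eventually_lt_const
      (ENNReal.ofReal_pos.mpr h5 : (0:ℝ≥0∞) < ENNReal.ofReal (ε/5))).exists
    set S : ℝ := ∑ i ∈ Finset.range M, 1 / l i with hSdef
    have hS0 : 0 ≤ S := Finset.sum_nonneg fun i _ => by
      have := hl0 i; positivity
    set ω : ℝ := (ε/5) / (2*S + 2) with hωdef
    have hω0 : 0 < ω := div_pos h5 (by linarith)
    have hωlt : ω < ε/5 := div_lt_self h5 (by linarith)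
    obtain ⟨d0, hd00, huc⟩ := Metric.uniformContinuousOn_iff.mp
      (isCompact_Icc.uniformContinuousOn_of_continuous hfc) ω hω0
    set δ : ℝ := d0/2 with hδdef
    have hδ0 : 0 < δ := by positivity
    have hδd0 : δ < d0 := by rw [hδdef]; linarith
    have hFuc : ∀ u v : ℝ, |u - v| ≤ δ → |F u - F v| ≤ ω := by
      intro u v huv
      have hlipc : LipschitzWith 1 fun x : ℝ => max 0 (min x 1) :=
        (LipschitzWith.id.min_const 1).const_max 0
      have hd1 := hlipc.dist_le_mul u v
      rw [NNReal.coe_one, one_mul, Real.dist_eq, Real.dist_eq] at hd1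
      have hd2 : dist (max 0 (min u 1)) (max 0 (min v 1)) < d0 := by
        rw [Real.dist_eq]
        calc |max 0 (min u 1) - max 0 (min v 1)| ≤ |u - v| := hd1
          _ ≤ δ := huv
          _ < d0 := hδd0
      have := huc _ (hclamp_mem u) _ (hclamp_mem v) hd2
      rw [Real.dist_eq] at this
      simp only [hFdef]
      exact this.le
    set G : ℝ → ℝ := fun z => ∫ t in (0:ℝ)..z, F t with hGdef
    have hGd : ∀ z : ℝ, HasDerivAt G (F z) z := fun z =>
      intervalIntegral.integral_hasDerivAt_right (hFc.intervalIntegrable 0 z)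
        (hFc.stronglyMeasurableAtFilter _ _) hFc.continuousAt
    set g : ℝ → ℝ := fun z => (∫ t in (0:ℝ)..δ, F (z + t)) / δ with hgdef
    have hgG : g = fun z => (G (z + δ) - G z) / δ := by
      funext z
      simp only [hgdef, hGdef]
      congr 1
      have h1 : (∫ t in (0:ℝ)..δ, F (z + t)) = ∫ t in (0:ℝ)..δ, F (t + z) := by
        refine intervalIntegral.integral_congr fun t _ => ?_
        rw [add_comm]
      rw [h1, intervalIntegral.integral_comp_add_right (fun t => F t) z]
      have h2 := intervalIntegral.integral_add_adjacent_intervals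
        (hFc.intervalIntegrable (μ := volume) 0 z) (hFc.intervalIntegrable (μ := volume) z (δ + z))
      have h3 : z + δ = δ + z := by ring
      rw [zero_add, h3]
      linarith [h2]
    have hgd : ∀ z : ℝ, HasDerivAt g ((F (z + δ) - F z) / δ) z := by
      intro z
      rw [hgG]
      exact ((HasDerivAt.comp_add_const z δ (hGd (z+δ))).sub (hGd z)).div_const δ
    have hFg : ∀ z : ℝ, |F z - g z| ≤ ω := by
      intro z
      have hint1 : IntervalIntegrable (fun t : ℝ => F (z + t)) volume 0 δ :=
        (hFc.comp (continuous_const.add continuous_id)).intervalIntegrable 0 δ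
      have h1 : F z - g z = (∫ t in (0:ℝ)..δ, (F z - F (z + t))) / δ := by
        rw [intervalIntegral.integral_sub intervalIntegrable_const hint1,
          intervalIntegral.integral_const, smul_eq_mul, sub_zero]
        simp only [hgdef]
        field_simp
      rw [h1, abs_div, abs_of_pos hδ0, div_le_iff₀ hδ0]
      calc |∫ t in (0:ℝ)..δ, (F z - F (z + t))|
          ≤ ∫ t in (0:ℝ)..δ, |F z - F (z + t)| := by
            simpa [Real.norm_eq_abs] using intervalIntegral.norm_integral_le_integral_norm
              (f := fun t => F z - F (z + t)) (μ := volume) hδ0.le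
        _ ≤ ∫ t in (0:ℝ)..δ, ω := by
            refine intervalIntegral.integral_mono_on hδ0.le
              ((continuous_const.sub (hFc.comp
                (continuous_const.add continuous_id))).abs.intervalIntegrable 0 δ)
              intervalIntegrable_const ?_
            intro t ht
            refine hFuc z (z + t) ?_
            have h4 : z - (z + t) = -t := by ring
            rw [h4, abs_neg, abs_of_nonneg ht.1]
            exact ht.2
        _ = ω * δ := by rw [intervalIntegral.integral_const, smul_eq_mul, sub_zero, mul_comm]
    have hfg : ∀ z ∈ Set.Icc (0:ℝ) 1, |f z - g z| ≤ ω := by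
      intro z hz
      rw [← hFf z hz]
      exact hFg z
    have hl0M : ∀ n, 0 < (fun n => l (n + M)) n := fun n => hl0 _
    have hanti : lamVar (fun n => l (n + M)) f ≤ lamVar l f :=
      lamVar_anti l _ f hl0 fun n => hlm (Nat.le_add_right n M)
    have hFvar : lamVar (fun n => l (n + M)) F = lamVar (fun n => l (n + M)) f :=
      lamVar_congr _ hFf
    have hFfin : lamVar (fun n => l (n + M)) F ≠ ⊤ := by
      rw [hFvar]
      exact (lt_of_le_of_lt hanti hfin).ne
    have havg : lamVar (fun n => l (n + M)) g ≤ lamVar (fun n => l (n + M)) f := by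
      have h1 := lamVar_avg (fun n => l (n + M)) hl0M F hFc hclamp2 δ hδ0 hFfin
      rw [← hgdef] at h1
      rw [hFvar] at h1
      exact h1
    have hsplit := lamVar_split l hl0 (fun z => f z - g z) ω hω0.le hfg M
    have hsub := lamVar_sub_le (fun n => l (n + M)) hl0M f g
    have hωS : ∑ i ∈ Finset.range M, 2 * ω / l i = 2 * ω * S := by
      rw [hSdef, Finset.mul_sum]
      refine Finset.sum_congr rfl fun i _ => ?_
      rw [mul_one_div]
    have hωS_lt : 2 * ω * S < ε/5 := by
      have hmul : ω * (2*S + 2) = ε/5 := div_mul_cancel₀ _ (by linarith)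
      nlinarith
    have hA : lamVar l (fun z => f z - g z) <
        ENNReal.ofReal (ε/5) + (ENNReal.ofReal (ε/5) + ENNReal.ofReal (ε/5)) := by
      refine lt_of_le_of_lt hsplit ?_
      refine ENNReal.add_lt_add ?_ ?_
      · rw [hωS]
        exact (ENNReal.ofReal_lt_ofReal_iff h5).mpr hωS_lt
      · refine lt_of_le_of_lt hsub ?_
        exact ENNReal.add_lt_add hM (lt_of_le_of_lt havg hM)
    have hgder_cont : Continuous fun z => (F (z + δ) - F z) / δ :=
      ((hFc.comp (continuous_id.add continuous_const)).sub hFc).div_const δ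
    have hl00 := hl0 0
    set η : ℝ := (ε/5) * l 0 / 2 with hηdef
    have hη0 : 0 < η := by positivity
    obtain ⟨r, hr⟩ := exists_polynomial_near_of_continuousOn 0 1 _
      hgder_cont.continuousOn η hη0
    set q : Polynomial ℝ := pint r + Polynomial.C (g 0 - (pint r).eval 0) with hqdef
    have hq0 : q.eval 0 = g 0 := by simp [hqdef]
    have hqd : ∀ z : ℝ, HasDerivAt (fun y => q.eval y) (r.eval z) z := by
      intro z
      have h1 := q.hasDerivAt z
      have h2 : q.derivative = r := by
        simp [hqdef, pint_deriv]
      rwa [h2] at h1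
    have hlip := lip_bound (fun z => g z - q.eval z)
      (fun z => (F (z + δ) - F z) / δ - r.eval z) η
      (fun z => (hgd z).sub (hqd z))
      (fun z hz => by
        have h6 := hr z hz
        rw [abs_sub_comm] at h6
        exact h6.le)
    have hB : lamVar l (fun z => g z - q.eval z) ≤ ENNReal.ofReal (η / l 0) :=
      lamVar_le_of_lip l hl0 hlm _ η hη0.le hlip
    have hηl : η / l 0 = (ε/5)/2 := by
      rw [hηdef]
      field_simp
    have hB' : lamVar l (fun z => g z - q.eval z) < ENNReal.ofReal (ε/5) := by
      refine lt_of_le_of_lt hB ?_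
      rw [hηl]
      exact (ENNReal.ofReal_lt_ofReal_iff h5).mpr (by linarith)
    refine ⟨q, ?_⟩
    have htri : lamVar l (fun z => f z - q.eval z)
        ≤ lamVar l (fun z => f z - g z) + lamVar l (fun z => g z - q.eval z) := by
      have h1 := lamVar_add_le l hl0 (fun z => f z - g z) (fun z => g z - q.eval z)
      have h2 : (fun z => (f z - g z) + (g z - q.eval z)) = fun z => f z - q.eval z := by
        funext z; ring
      rwa [h2] at h1
    have h00 : (0:ℝ) ∈ Set.Icc (0:ℝ) 1 := ⟨le_rfl, zero_le_one⟩
    have hz0 : ENNReal.ofReal |f 0 - q.eval 0| < ENNReal.ofReal (ε/5) := by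
      rw [hq0]
      refine (ENNReal.ofReal_lt_ofReal_iff h5).mpr ?_
      exact lt_of_le_of_lt (hfg 0 h00) hωlt
    calc lamNorm l (fun x => f x - q.eval x)
        = lamVar l (fun z => f z - q.eval z) + ENNReal.ofReal |f 0 - q.eval 0| := rfl
      _ ≤ (lamVar l (fun z => f z - g z) + lamVar l (fun z => g z - q.eval z))
            + ENNReal.ofReal |f 0 - q.eval 0| := add_le_add_left htri _
      _ < ((ENNReal.ofReal (ε/5) + (ENNReal.ofReal (ε/5) + ENNReal.ofReal (ε/5)))
            + ENNReal.ofReal (ε/5)) + ENNReal.ofReal (ε/5) :=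
          ENNReal.add_lt_add (ENNReal.add_lt_add hA hB') hz0
      _ = ENNReal.ofReal ε := by
          rw [← ENNReal.ofReal_add (by linarith) (by linarith),
            ← ENNReal.ofReal_add (by linarith) (by linarith),
            ← ENNReal.ofReal_add (by linarith) (by linarith),
            ← ENNReal.ofReal_add (by linarith) (by linarith)]
          congr 1
          ring
  · intro H
    have hfin : lamVar l f < ⊤ := by
      obtain ⟨p, hp⟩ := H 1 one_pos
      obtain ⟨C, hC0, hCp⟩ := hpoly p
      have h2 : lamVar l f ≤ lamVar l (fun z => f z - p.eval z) + lamVar l (fun z => p.eval z) := by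
        have h3 := lamVar_add_le l hl0 (fun z => f z - p.eval z) (fun z => p.eval z)
        have h4 : (fun z => (f z - p.eval z) + p.eval z) = f := by funext z; ring
        rwa [h4] at h3
      refine lt_of_le_of_lt h2 ?_
      have h5 : lamVar l (fun z => p.eval z) ≤ ENNReal.ofReal (C / l 0) := hCp 0
      have h6 : lamVar l (fun z => f z - p.eval z) < ENNReal.ofReal 1 :=
        lt_of_le_of_lt le_self_add hp
      calc lamVar l (fun z => f z - p.eval z) + lamVar l (fun z => p.eval z)
          ≤ ENNReal.ofReal 1 + ENNReal.ofReal (C / l 0) := add_le_add h6.le h5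
        _ < ⊤ := by
            rw [← ENNReal.ofReal_add one_pos.le (div_nonneg hC0 (hl0 0).le)]
            exact ENNReal.ofReal_lt_top
    have hciv : ContInLamVar l f := by
      rw [ContInLamVar, ENNReal.tendsto_atTop_zero]
      intro ε hε
      set ε' := min ε 1 with hε'
      have hε'0 : 0 < ε' := lt_min hε zero_lt_one
      have hε'top : ε' ≠ ⊤ := by
        simp only [hε', ne_eq]
        exact ne_top_of_le_ne_top (by norm_num) (min_le_right _ _)
      set r := ε'.toReal with hrdef
      have hr0 : 0 < r := ENNReal.toReal_pos hε'0.ne' hε'top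
      obtain ⟨p, hp⟩ := H (r/2) (by linarith)
      obtain ⟨C, hC0, hCp⟩ := hpoly p
      have hev := hltop.eventually_ge_atTop (2*C/r + 1)
      rw [Filter.eventually_atTop] at hev
      obtain ⟨N, hN⟩ := hev
      refine ⟨N, fun M hM => ?_⟩
      have hlM : 2*C/r + 1 ≤ l M := hN M hM
      have h2 : lamVar (fun n => l (n + M)) f
          ≤ lamVar (fun n => l (n + M)) (fun z => f z - p.eval z)
            + lamVar (fun n => l (n + M)) (fun z => p.eval z) := by
        have h3 := lamVar_add_le (fun n => l (n + M)) (fun n => hl0 _)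
          (fun z => f z - p.eval z) (fun z => p.eval z)
        have h4 : (fun z => (f z - p.eval z) + p.eval z) = f := by funext z; ring
        rwa [h4] at h3
      have h5 : lamVar (fun n => l (n + M)) (fun z => f z - p.eval z)
          ≤ ENNReal.ofReal (r/2) := by
        refine le_trans (lamVar_anti l _ _ hl0 (fun n => hlm (Nat.le_add_right n M))) ?_
        exact le_trans le_self_add hp.le
      have h6 : lamVar (fun n => l (n + M)) (fun z => p.eval z) ≤ ENNReal.ofReal (r/2) := by
        refine le_trans (hCp M) (ENNReal.ofReal_le_ofReal ?_)
        have hlM0 : 0 < l M := hl0 M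
        rw [div_le_iff₀ hlM0]
        have hmul : (r/2) * (2*C/r + 1) = C + r/2 := by field_simp
        nlinarith [mul_le_mul_of_nonneg_left hlM (by linarith : (0:ℝ) ≤ r/2)]
      calc lamVar (fun n => l (n + M)) f
          ≤ ENNReal.ofReal (r/2) + ENNReal.ofReal (r/2) :=
            le_trans h2 (add_le_add h5 h6)
        _ = ENNReal.ofReal r := by
            rw [← ENNReal.ofReal_add (by linarith) (by linarith)]
            norm_num
        _ = ε' := ENNReal.ofReal_toReal hε'top
        _ ≤ ε := min_le_left _ _
    have hcont : ContinuousOn f (Set.Icc 0 1) := by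
      have hch : ∀ n : ℕ, ∃ p : Polynomial ℝ,
          lamNorm l (fun z => f z - p.eval z) < ENNReal.ofReal (1/(n+1)) :=
        fun n => H (1/(n+1)) (by positivity)
      choose P hP using hch
      have hbound : ∀ n : ℕ, ∀ z ∈ Set.Icc (0:ℝ) 1,
          |f z - (P n).eval z| ≤ (1/((n:ℝ)+1)) * (l 0 + 1) := by
        intro n z hz
        set h := fun z => f z - (P n).eval z with hh
        have hn1 : (0:ℝ) < 1/((n:ℝ)+1) := by positivity
        have e1 : ENNReal.ofReal (|h z - h 0| / l 0) ≤ lamVar l h :=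
          pair_le_lamVar l h ⟨le_rfl, zero_le_one⟩ hz hz.1
        have e3 : |h z - h 0| / l 0 < 1/((n:ℝ)+1) := by
          have e2 := lt_of_le_of_lt (le_trans e1 le_self_add) (hP n)
          rwa [ENNReal.ofReal_lt_ofReal_iff hn1] at e2
        have e5 : |h 0| < 1/((n:ℝ)+1) := by
          have e4 := lt_of_le_of_lt (le_add_self (a := ENNReal.ofReal |h 0|)
            (b := lamVar l h)) (hP n)
          rwa [ENNReal.ofReal_lt_ofReal_iff hn1] at e4
        have hl00 := hl0 0
        have e6 : |h z - h 0| < (1/((n:ℝ)+1)) * l 0 := by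
          rw [div_lt_iff₀ hl00] at e3
          linarith
        calc |h z| = |(h z - h 0) + h 0| := by ring_nf
          _ ≤ |h z - h 0| + |h 0| := abs_add_le _ _
          _ ≤ (1/((n:ℝ)+1)) * l 0 + 1/((n:ℝ)+1) := by linarith
          _ = (1/((n:ℝ)+1)) * (l 0 + 1) := by ring
      have huni : TendstoUniformlyOn (fun n z => (P n).eval z) f atTop (Set.Icc 0 1) := by
        rw [Metric.tendstoUniformlyOn_iff]
        intro η hη
        have hlim : Tendsto (fun n : ℕ => (1/((n:ℝ)+1)) * (l 0 + 1)) atTop (𝓝 0) := by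
          have h1 := tendsto_one_div_add_atTop_nhds_zero_nat (𝕜 := ℝ)
          have := h1.mul_const (l 0 + 1)
          simpa using this
        have hev := hlim.eventually_lt_const hη
        filter_upwards [hev] with n hn z hz
        have hb := hbound n z hz
        rw [Real.dist_eq]
        calc |f z - (P n).eval z| ≤ (1/((n:ℝ)+1)) * (l 0 + 1) := hb
          _ < η := hn
      exact huni.continuousOn (Filter.Frequently.of_forall
        fun n => (Polynomial.continuous _).continuousOn)
    exact ⟨hcont, hfin, hciv⟩
end
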